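/- arXiv:1211.3356 — 11 statements merged into one kernel-verified Lean document; each statement's English description precedes it below -/
import Mathlib

section
/- Let (X,d) be a metric vector space with translation-invariant metric. If X is finite-dimensional and {A_n} is a chain A_0 ⊆ A_1 ⊆ … ⊆ X of subsets satisfying (A1) there is K:ℕ→ℕ with K(n) ≥ n and A_n + A_n ⊆ A_{K(n)}, (A2) λA_n ⊆ A_n for all scalars λ, and (A3) ⋃_n A_n is dense in X, then there exists N ∈ ℕ such that A_N = X. -/
open Filter Metric Pointwise

/-- In a finite-dimensional metric vector space (TVS with
translation-invariant metric), any approximation scheme stabilizes: some `A N = X`. -/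
theorem approximation_scheme_finite_dimensional_stabilizes
    {X : Type*} [AddCommGroup X] [Module ℝ X] [MetricSpace X]
    [IsTopologicalAddGroup X] [ContinuousSMul ℝ X] [FiniteDimensional ℝ X]
    (hinv : ∀ x y z : X, dist (x + z) (y + z) = dist x y)
    (A : ℕ → Set X) (hchain : ∀ n, A n ⊆ A (n + 1))
    (K : ℕ → ℕ) (hK : ∀ n, n ≤ K n) (hA1 : ∀ n, A n + A n ⊆ A (K n))
    (hA2 : ∀ (n : ℕ) (c : ℝ), c • A n ⊆ A n)
    (hA3 : Dense (⋃ n, A n)) :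
    ∃ N : ℕ, A N = Set.univ := by
  have hmono : Monotone A := monotone_nat_of_le_succ hchain
  -- some A n is nonempty
  obtain ⟨x0, hx0⟩ := hA3.nonempty
  obtain ⟨_, ⟨n0, rfl⟩, hx0⟩ := hx0
  -- the spans stabilize
  set S : ℕ →o Submodule ℝ X :=
    ⟨fun n => Submodule.span ℝ (A n), fun a b hab => Submodule.span_mono (hmono hab)⟩ with hS
  have hnoeth : IsNoetherian ℝ X := inferInstance
  obtain ⟨N, hN⟩ := monotone_stabilizes_iff_noetherian.mpr hnoeth S
  -- span (A N) = ⊤ by density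
  have hspan : Submodule.span ℝ (A N) = ⊤ := by
    have hsub : (⋃ n, A n) ⊆ (Submodule.span ℝ (A N) : Set X) := by
      rintro x ⟨_, ⟨n, rfl⟩, hx⟩
      rcases le_total n N with h | h
      · exact Submodule.span_mono (hmono h) (Submodule.subset_span hx)
      · have := hN n h
        have hx' : x ∈ (S n : Submodule ℝ X) := Submodule.subset_span hx
        rwa [← this] at hx'
    have hclosed : IsClosed (Submodule.span ℝ (A N) : Set X) :=
      Submodule.closed_of_finiteDimensional _
    have : closure (⋃ n, A n) ⊆ (Submodule.span ℝ (A N) : Set X) :=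
      hclosed.closure_subset_iff.mpr hsub
    rw [hA3.closure_eq] at this
    exact Submodule.eq_top_iff'.mpr fun x => this (Set.mem_univ x)
  -- a finite subset of A N spans
  have hfin : ∃ t : Finset X, ↑t ⊆ A N ∧ Submodule.span ℝ (t : Set X) = ⊤ := by
    classical
    obtain ⟨s, hs⟩ := Module.finite_def.mp ‹Module.Finite ℝ X›
    have hmem : ∀ a : X, ∃ u : Finset X, ↑u ⊆ A N ∧ a ∈ Submodule.span ℝ (u : Set X) :=
      fun a => Submodule.mem_span_finite_of_mem_span (by rw [hspan]; trivial)
    choose u hu1 hu2 using hmem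
    refine ⟨s.biUnion u, ?_, ?_⟩
    · intro x hx
      simp only [Finset.coe_biUnion, Set.mem_iUnion] at hx
      obtain ⟨a, _, hxa⟩ := hx
      exact hu1 a hxa
    · rw [eq_top_iff, ← hs]
      refine Submodule.span_le.mpr fun a ha => ?_
      refine Submodule.span_mono (t := ((s.biUnion u : Finset X) : Set X)) ?_ (hu2 a)
      intro y hy
      simp only [Finset.coe_biUnion, Set.mem_iUnion]
      exact ⟨a, ha, hy⟩
  obtain ⟨t, htA, htspan⟩ := hfin
  -- iterate K to absorb sums
  set M0 : ℕ := max N n0 with hM0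
  set g : ℕ → ℕ := fun k => K^[k] M0 with hg
  have hg0 : g 0 = M0 := rfl
  have hgsucc : ∀ k, g (k + 1) = K (g k) := fun k => Function.iterate_succ_apply' K k M0
  have hgmono : Monotone g := monotone_nat_of_le_succ (fun k => by rw [hgsucc]; exact hK _)
  have hNg : ∀ k, A N ⊆ A (g k) := fun k =>
    hmono (le_trans (le_max_left _ _) (hgmono (Nat.zero_le k)))
  have h0 : (0 : X) ∈ A (g 0) := by
    have hx0' : x0 ∈ A (g 0) := hmono (le_max_right _ _) hx0
    have := hA2 (g 0) 0 (Set.smul_mem_smul_set hx0')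
    simpa using this
  -- sums of elements of A N land in A (g card)
  have hsum : ∀ (s : Finset X) (f : X → X), (∀ a ∈ s, f a ∈ A N) →
      (∑ a ∈ s, f a) ∈ A (g s.card) := by
    classical
    intro s
    induction s using Finset.induction with
    | empty => intro f _; simpa using h0
    | insert _ _ ha ih =>
      rename_i a s
      intro f hf
      rw [Finset.sum_insert ha, Finset.card_insert_of_notMem ha, hgsucc]
      exact hA1 _ (Set.add_mem_add (hNg _ (hf a (Finset.mem_insert_self a s)))
        (ih f fun b hb => hf b (Finset.mem_insert_of_mem hb)))
  refine ⟨g t.card, Set.eq_univ_of_forall fun x => ?_⟩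
  have hx : x ∈ Submodule.span ℝ (t : Set X) := htspan ▸ Submodule.mem_top
  obtain ⟨c, hcsupp, hcsum⟩ := Submodule.mem_span_set.mp hx
  have : x = ∑ a ∈ c.support, c a • a := by
    rw [← hcsum]; rfl
  rw [this]
  have hcard : c.support.card ≤ t.card := Finset.card_le_card (by exact_mod_cast hcsupp)
  have hmem : (∑ a ∈ c.support, c a • a) ∈ A (g c.support.card) := by
    apply hsum
    intro a ha
    exact hA2 N (c a) ⟨a, htA (hcsupp ha), rfl⟩
  exact hmono (hgmono hcard) hmem
end

section
/- Given a sequence {ε_n} of nonnegative reals decreasing to 0 and an increasing sequence h:ℕ→ℕ of natural numbers with n ≤ h(n) for all n, there exists a sequence {ξ_n} decreasing to 0 such that ε_n ≤ ξ_n and ξ_n ≤ 2 ξ_{h(n)} for all n. -/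
open Filter

/-- Given `ε_n ↘ 0` and an increasing `h : ℕ → ℕ` with `n ≤ h n`,
there is `ξ_n ↘ 0` with `ε_n ≤ ξ_n` and `ξ_n ≤ 2 ξ_{h n}` for all `n`. -/
theorem exists_dominating_sequence (ε : ℕ → ℝ) (hnonneg : ∀ n, 0 ≤ ε n)
    (hanti : Antitone ε) (hlim : Tendsto ε atTop (nhds 0))
    (h : ℕ → ℕ) (hmono : Monotone h) (hge : ∀ n, n ≤ h n) :
    ∃ ξ : ℕ → ℝ, (∀ n, 0 ≤ ξ n) ∧ Antitone ξ ∧ Tendsto ξ atTop (nhds 0) ∧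
      ∀ n, ε n ≤ ξ n ∧ ξ n ≤ 2 * ξ (h n) := by
  set S : ℕ → Set ℝ := fun m => {x | ∃ n k, m ≤ h^[k] n ∧ x = ε n / 2 ^ k} with hS
  set ξ : ℕ → ℝ := fun m => sSup (S m) with hξ
  have hmem : ∀ m, ε m ∈ S m := fun m => ⟨m, 0, by simp⟩
  have hne : ∀ m, (S m).Nonempty := fun m => ⟨ε m, hmem m⟩
  have hbdd : ∀ m, BddAbove (S m) := by
    intro m
    refine ⟨ε 0, ?_⟩
    rintro x ⟨n, k, -, rfl⟩
    calc ε n / 2 ^ k ≤ ε n / 1 := by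
          apply div_le_div_of_nonneg_left (hnonneg n) one_pos
          exact one_le_pow₀ (by norm_num : (1:ℝ) ≤ 2)
      _ = ε n := div_one _
      _ ≤ ε 0 := hanti (Nat.zero_le n)
  have hεle : ∀ m, ε m ≤ ξ m := fun m => le_csSup (hbdd m) (hmem m)
  have hξnonneg : ∀ m, 0 ≤ ξ m := fun m => (hnonneg m).trans (hεle m)
  have hξanti : Antitone ξ := by
    intro a b hab
    apply csSup_le_csSup (hbdd a) (hne b)
    rintro x ⟨n, k, hk, rfl⟩
    exact ⟨n, k, hab.trans hk, rfl⟩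
  refine ⟨ξ, hξnonneg, hξanti, ?_, fun n => ⟨hεle n, ?_⟩⟩
  · rw [Metric.tendsto_atTop]
    intro δ hδ
    obtain ⟨N, hN⟩ := (Metric.tendsto_atTop.mp hlim) δ hδ
    have hεN : ε N < δ := by
      have := hN N le_rfl
      rwa [Real.dist_eq, sub_zero, abs_of_nonneg (hnonneg N)] at this
    obtain ⟨K, hK⟩ := pow_unbounded_of_one_lt (ε 0 / δ) (by norm_num : (1:ℝ) < 2)
    have hK' : ε 0 / 2 ^ K < δ := by
      rw [div_lt_iff₀ (by positivity)]
      rw [div_lt_iff₀ hδ] at hK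
      linarith [hK]
    set M := ((Finset.range N) ×ˢ (Finset.range K)).sup (fun p => h^[p.2] p.1) + 1
    refine ⟨M, fun m hm => ?_⟩
    rw [Real.dist_eq, sub_zero, abs_of_nonneg (hξnonneg m)]
    have : ξ m ≤ max (ε N) (ε 0 / 2 ^ K) := by
      apply csSup_le (hne m)
      rintro x ⟨n, k, hk, rfl⟩
      rcases le_or_gt N n with hn | hn
      · refine le_max_of_le_left ?_
        calc ε n / 2 ^ k ≤ ε n / 1 := by
              apply div_le_div_of_nonneg_left (hnonneg n) one_pos
              exact one_le_pow₀ (by norm_num : (1:ℝ) ≤ 2)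
          _ = ε n := div_one _
          _ ≤ ε N := hanti hn
      · rcases le_or_gt K k with hk' | hk'
        · refine le_max_of_le_right ?_
          apply div_le_div₀ (hnonneg 0) (hanti (Nat.zero_le n))
          · positivity
          · exact pow_le_pow_right₀ (by norm_num) hk'
        · exfalso
          have hpm : (n, k) ∈ (Finset.range N) ×ˢ (Finset.range K) :=
            Finset.mem_product.mpr ⟨Finset.mem_range.mpr hn, Finset.mem_range.mpr hk'⟩
          have : h^[k] n < M :=
            Nat.lt_succ_of_le (Finset.le_sup (f := fun p : ℕ × ℕ => h^[p.2] p.1) hpm)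
          omega
    exact lt_of_le_of_lt this (max_lt hεN hK')
  · apply csSup_le (hne n)
    rintro x ⟨p, k, hk, rfl⟩
    have hmem' : ε p / 2 ^ (k + 1) ∈ S (h n) := by
      refine ⟨p, k + 1, ?_, rfl⟩
      rw [Function.iterate_succ_apply']
      exact hmono hk
    have := le_csSup (hbdd (h n)) hmem'
    have h2 : ε p / 2 ^ k = 2 * (ε p / 2 ^ (k + 1)) := by
      field_simp; ring
    rw [h2]
    linarith
end

section
/- Let (X,d) be an F-space (complete metric vector space with translation-invariant metric) with non-decreasing metric, and let {A_n} be an approximation scheme on X. If {A_n} fails Shapiro's theorem on X (i.e., there exists ε_n ↘ 0 such that for every x ∈ X there is C(x) > 0 with E(x,A_n) ≤ C(x)ε_n for all n), then there exists r_0 > 0 and a sequence δ_n ↘ 0 such that E(x,A_n) ≤ δ_n for all n ∈ ℕ and all x ∈ B(0,r_0). -/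
open Filter Metric Pointwise

/-- In an F-space with non-decreasing translation-invariant metric,
if an approximation scheme `{A_n}` fails Shapiro's theorem (some `ε_n ↘ 0` dominates
all errors up to constants), then it fails it uniformly on some ball `B(0,r₀)`. -/
theorem fails_shapiro_uniformly_on_ball {X : Type*} [AddCommGroup X] [Module ℝ X]
    [MetricSpace X] [IsTopologicalAddGroup X] [ContinuousSMul ℝ X] [CompleteSpace X]
    (hinv : ∀ x y z : X, dist (x + z) (y + z) = dist x y)
    (hnd : ∀ (α : ℝ) (x : X), 0 ≤ α → α ≤ 1 → dist (α • x) 0 ≤ dist x 0)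
    (A : ℕ → Set X) (hchain : ∀ n, A n ⊆ A (n + 1))
    (K : ℕ → ℕ) (hK : ∀ n, n ≤ K n) (hA1 : ∀ n, A n + A n ⊆ A (K n))
    (hA2 : ∀ (n : ℕ) (c : ℝ), c • A n ⊆ A n)
    (hA3 : Dense (⋃ n, A n))
    (ε : ℕ → ℝ) (hεnonneg : ∀ n, 0 ≤ ε n) (hεanti : Antitone ε)
    (hεlim : Tendsto ε atTop (nhds 0))
    (hfail : ∀ x : X, ∃ C : ℝ, 0 < C ∧ ∀ n, infDist x (A n) ≤ C * ε n) :
    ∃ r₀ : ℝ, 0 < r₀ ∧ ∃ δ : ℕ → ℝ, (∀ n, 0 ≤ δ n) ∧ Antitone δ ∧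
      Tendsto δ atTop (nhds 0) ∧
      ∀ n, ∀ x ∈ closedBall (0 : X) r₀, infDist x (A n) ≤ δ n := by
  rcases isEmpty_or_nonempty X with hX | hX
  · exact ⟨1, one_pos, ε, hεnonneg, hεanti, hεlim, fun n x _ => (IsEmpty.false x).elim⟩
  have hmono : Monotone A := monotone_nat_of_le_succ hchain
  -- find n₀ with A n₀ nonempty
  obtain ⟨y, hy⟩ := hA3.nonempty
  rw [Set.mem_iUnion] at hy
  obtain ⟨n₀, hn₀⟩ := hy
  have hnonempty : ∀ j, n₀ ≤ j → (A j).Nonempty := fun j hj => ⟨y, hmono hj hn₀⟩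
  have hzero : ∀ j, (A j).Nonempty → (0 : X) ∈ A j := by
    rintro j ⟨a, ha⟩
    have h0 : (0 : ℝ) • a ∈ (0 : ℝ) • A j := Set.smul_mem_smul_set ha
    have := hA2 j 0 h0
    simpa using this
  have hneg : ∀ j, ∀ a ∈ A j, -a ∈ A j := by
    intro j a ha
    have h0 : (-1 : ℝ) • a ∈ (-1 : ℝ) • A j := Set.smul_mem_smul_set ha
    have := hA2 j (-1) h0
    simpa using this
  -- Baire category
  set Γ : ℕ → Set X := fun m => ⋂ n, {x | infDist x (A n) ≤ m * ε n} with hΓ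
  have hclosed : ∀ m, IsClosed (Γ m) :=
    fun m => isClosed_iInter fun n => isClosed_le (continuous_infDist_pt _) continuous_const
  have hcover : (⋃ m, Γ m) = Set.univ := by
    ext x
    simp only [Set.mem_iUnion, Set.mem_univ, iff_true, hΓ, Set.mem_iInter, Set.mem_setOf_eq]
    obtain ⟨C, hC, hCx⟩ := hfail x
    obtain ⟨m, hm⟩ := exists_nat_ge C
    exact ⟨m, fun n => (hCx n).trans (mul_le_mul_of_nonneg_right hm (hεnonneg n))⟩
  obtain ⟨m, x₀, hx₀⟩ := nonempty_interior_of_iUnion_of_closed hclosed hcover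
  obtain ⟨r, hr, hball⟩ := Metric.mem_nhds_iff.mp (mem_interior_iff_mem_nhds.mp hx₀)
  have hx₀Γ : ∀ n, infDist x₀ (A n) ≤ m * ε n := by
    have := interior_subset hx₀
    simp only [hΓ, Set.mem_iInter, Set.mem_setOf_eq] at this
    exact this
  set r₀ := r / 2 with hr₀def
  have hr₀ : 0 < r₀ := by positivity
  -- Key estimate on the ball
  have key : ∀ n, (A n).Nonempty → ∀ x ∈ closedBall (0 : X) r₀,
      infDist x (A (K n)) ≤ 2 * m * ε n := by
    intro n hn x hx
    have hx' : dist x 0 ≤ r₀ := mem_closedBall.mp hx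
    -- x + x₀ ∈ Γ m
    have hmemΓ : ∀ k, infDist (x + x₀) (A k) ≤ m * ε k := by
      have hd : dist (x + x₀) x₀ = dist x 0 := by
        rw [← hinv x 0 x₀, zero_add]
      have : x + x₀ ∈ Γ m := by
        apply hball
        rw [Metric.mem_ball, hd]
        calc dist x 0 ≤ r₀ := hx'
          _ < r := by rw [hr₀def]; linarith
      simp only [hΓ, Set.mem_iInter, Set.mem_setOf_eq] at this
      exact this
    -- infDist (-x₀) (A n) ≤ infDist x₀ (A n)
    have hnegle : infDist (-x₀) (A n) ≤ infDist x₀ (A n) := by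
      apply le_of_forall_pos_le_add
      intro ρ hρ
      obtain ⟨a, ha, hda⟩ := (infDist_lt_iff hn).mp (lt_add_of_pos_right _ hρ)
      have hdd : dist (-x₀) (-a) = dist x₀ a := by
        have h := hinv (-x₀) (-a) (x₀ + a)
        rw [show -x₀ + (x₀ + a) = a by abel, show -a + (x₀ + a) = x₀ by abel] at h
        rw [← h, dist_comm]
      calc infDist (-x₀) (A n) ≤ dist (-x₀) (-a) := infDist_le_dist_of_mem (hneg n a ha)
        _ = dist x₀ a := hdd
        _ ≤ infDist x₀ (A n) + ρ := le_of_lt hda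
    -- sum estimate
    have hsum : infDist x (A (K n)) ≤ infDist (x + x₀) (A n) + infDist (-x₀) (A n) := by
      apply le_of_forall_pos_le_add
      intro ρ hρ
      obtain ⟨a, ha, hda⟩ := (infDist_lt_iff hn).mp
        (lt_add_of_pos_right (infDist (x + x₀) (A n)) (half_pos hρ))
      obtain ⟨b, hb, hdb⟩ := (infDist_lt_iff hn).mp
        (lt_add_of_pos_right (infDist (-x₀) (A n)) (half_pos hρ))
      have hab : a + b ∈ A (K n) := hA1 n (Set.add_mem_add ha hb)
      have t1 : dist x (a - x₀) = dist (x + x₀) a := by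
        have h := hinv x (a - x₀) x₀
        rw [show a - x₀ + x₀ = a by abel] at h
        exact h.symm
      have t2 : dist (a - x₀) (a + b) = dist (-x₀) b := by
        have h := hinv (-x₀) b a
        rw [show -x₀ + a = a - x₀ by abel, show b + a = a + b by abel] at h
        exact h
      calc infDist x (A (K n)) ≤ dist x (a + b) := infDist_le_dist_of_mem hab
        _ ≤ dist x (a - x₀) + dist (a - x₀) (a + b) := dist_triangle _ _ _
        _ = dist (x + x₀) a + dist (-x₀) b := by rw [t1, t2]
        _ ≤ (infDist (x + x₀) (A n) + ρ / 2) + (infDist (-x₀) (A n) + ρ / 2) := by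
            exact add_le_add (le_of_lt hda) (le_of_lt hdb)
        _ = infDist (x + x₀) (A n) + infDist (-x₀) (A n) + ρ := by ring
    calc infDist x (A (K n)) ≤ infDist (x + x₀) (A n) + infDist (-x₀) (A n) := hsum
      _ ≤ m * ε n + m * ε n := add_le_add (hmemΓ n) (hnegle.trans (hx₀Γ n))
      _ = 2 * m * ε n := by ring
  -- every error on the ball is at most r₀
  have htriv : ∀ j, ∀ x ∈ closedBall (0 : X) r₀, infDist x (A j) ≤ r₀ := by
    intro j x hx
    rcases Set.eq_empty_or_nonempty (A j) with he | hne
    · rw [he, infDist_empty]; exact le_of_lt hr₀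
    · exact (infDist_le_dist_of_mem (hzero j hne)).trans (mem_closedBall.mp hx)
  -- construction of δ
  set b : ℕ → ℝ := fun n => 2 * m * ε n with hb
  have hbnonneg : ∀ n, 0 ≤ b n := fun n => by
    have := hεnonneg n; positivity
  have hbanti : Antitone b := fun i j hij =>
    mul_le_mul_of_nonneg_left (hεanti hij) (by positivity)
  set G : ℕ → ℕ := fun j => n₀ + Nat.findGreatest (fun n => K (n₀ + n) ≤ j) j with hG
  have hGmono : Monotone G := by
    intro i j hij
    exact add_le_add_right (Nat.findGreatest_mono (fun n hn => hn.trans hij) hij) n₀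
  have hGtop : Tendsto G atTop atTop := by
    rw [tendsto_atTop_atTop]
    intro N
    refine ⟨max (K (n₀ + N)) N, fun j hj => ?_⟩
    have h1 : K (n₀ + N) ≤ j := le_trans (le_max_left _ _) hj
    have h2 : N ≤ j := le_trans (le_max_right _ _) hj
    calc N ≤ Nat.findGreatest (fun n => K (n₀ + n) ≤ j) j := Nat.le_findGreatest h2 h1
      _ ≤ G j := Nat.le_add_left _ _
  have hGspec : ∀ j, K n₀ ≤ j → K (G j) ≤ j := by
    intro j hj
    have h0 : (fun n => K (n₀ + n) ≤ j) 0 := by simpa using hj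
    exact Nat.findGreatest_spec (P := fun n => K (n₀ + n) ≤ j) (Nat.zero_le j) h0
  set δ : ℕ → ℝ := fun j => if K n₀ ≤ j then min r₀ (b (G j)) else r₀ with hδ
  refine ⟨r₀, hr₀, δ, ?_, ?_, ?_, ?_⟩
  · intro j
    simp only [hδ]
    split_ifs
    · exact le_min (le_of_lt hr₀) (hbnonneg _)
    · exact le_of_lt hr₀
  · intro i j hij
    simp only [hδ]
    split_ifs with h1 h2 h3
    · exact min_le_min le_rfl (hbanti (hGmono hij))
    · exact min_le_left _ _
    · exact absurd (h3.trans hij) h1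
    · exact le_rfl
  · apply squeeze_zero'
    · filter_upwards with j
      simp only [hδ]
      split_ifs
      · exact le_min (le_of_lt hr₀) (hbnonneg _)
      · exact le_of_lt hr₀
    · filter_upwards [eventually_ge_atTop (K n₀)] with j hj
      simp only [hδ, if_pos hj]
      exact min_le_right _ _
    · have : Tendsto (fun j => b (G j)) atTop (nhds 0) := by
        have h1 : Tendsto (fun j => ε (G j)) atTop (nhds 0) := hεlim.comp hGtop
        have h2 := h1.const_mul (2 * (m : ℝ))
        simpa using h2
      exact this
  · intro j x hx
    simp only [hδ]
    split_ifs with h1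
    · refine le_min (htriv j x hx) ?_
      have hGn : n₀ ≤ G j := Nat.le_add_right _ _
      have hGne : (A (G j)).Nonempty := hnonempty _ hGn
      have hKne : (A (K (G j))).Nonempty := hnonempty _ (hGn.trans (hK _))
      calc infDist x (A j) ≤ infDist x (A (K (G j))) :=
            infDist_le_infDist_of_subset (hmono (hGspec j h1)) hKne
        _ ≤ b (G j) := key (G j) hGne x hx
    · exact htriv j x hx
end

section
/- Let (X,d) be a metric vector space with translation-invariant metric, M a vector subspace of X, and r > 0. Then E(B(0,r), M) = min{r, E(X,M)}, where E(B,M) = sup_{b∈B} inf_{m∈M} d(b,m) and E(X,M) = sup_{x∈X} inf_{m∈M} d(x,m). -/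
open Metric ENNReal

private lemma aux_add_le {X : Type*} [AddCommGroup X] [Module ℝ X] [MetricSpace X]
    (hinv : ∀ x y z : X, dist (x + z) (y + z) = dist x y)
    (M : Submodule ℝ X) {m : X} (hm : m ∈ M) (y : X) :
    EMetric.infEdist (y + m) (M : Set X) ≤ EMetric.infEdist y (M : Set X) := by
  unfold EMetric.infEdist Metric.infEDist
  refine le_iInf₂ fun m' hm' => ?_
  calc (⨅ z ∈ (M : Set X), edist (y + m) z) ≤ edist (y + m) (m' + m) :=
        iInf₂_le _ (M.add_mem hm' hm)
    _ = edist y m' := by rw [edist_dist, edist_dist, hinv]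

private lemma aux_sub_eq {X : Type*} [AddCommGroup X] [Module ℝ X] [MetricSpace X]
    (hinv : ∀ x y z : X, dist (x + z) (y + z) = dist x y)
    (M : Submodule ℝ X) {m : X} (hm : m ∈ M) (y : X) :
    EMetric.infEdist (y - m) (M : Set X) = EMetric.infEdist y (M : Set X) := by
  refine le_antisymm ?_ ?_
  · simpa [sub_eq_add_neg] using aux_add_le hinv M (M.neg_mem hm) y
  · have := aux_add_le hinv M hm (y - m)
    simpa using this

/-- **Albinus–Riesz lemma.** In a metric vector space with
translation-invariant metric, for any vector subspace `M` and any `r > 0`,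
`E(B(0,r), M) = min{r, E(X, M)}` (computed in `ℝ≥0∞` via `infEdist` so that the
possibly infinite supremum `E(X,M)` makes sense). -/
theorem albinus_riesz_lemma {X : Type*} [AddCommGroup X] [Module ℝ X] [MetricSpace X]
    [IsTopologicalAddGroup X] [ContinuousSMul ℝ X]
    (hinv : ∀ x y z : X, dist (x + z) (y + z) = dist x y)
    (M : Submodule ℝ X) (r : ℝ) (hr : 0 < r) :
    (⨆ b ∈ closedBall (0 : X) r, EMetric.infEdist b (M : Set X)) =
      min (ENNReal.ofReal r) (⨆ x : X, EMetric.infEdist x (M : Set X)) := by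
  refine le_antisymm ?_ ?_
  · refine iSup₂_le fun b hb => le_min ?_ (le_iSup (fun x => EMetric.infEdist x (M : Set X)) b)
    calc EMetric.infEdist b (M : Set X) ≤ edist b 0 :=
          EMetric.infEdist_le_edist_of_mem M.zero_mem
      _ ≤ ENNReal.ofReal r := by
          rw [edist_dist]
          exact ENNReal.ofReal_le_ofReal (mem_closedBall.mp hb)
  · refine le_of_forall_lt fun c hc => ?_
    have hcr : c < ENNReal.ofReal r := hc.trans_le (min_le_left _ _)
    have hcS : c < ⨆ x : X, EMetric.infEdist x (M : Set X) :=
      hc.trans_le (min_le_right _ _)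
    obtain ⟨x, hx⟩ := lt_iSup_iff.mp hcS
    -- pick c'' strictly between c and min (ofReal r) (f 1)
    set f : ℝ → ℝ≥0∞ := fun t => EMetric.infEdist (t • x) (M : Set X) with hf
    have hf1 : c < f 1 := by simpa [hf] using hx
    obtain ⟨c'', hc1, hc2⟩ := exists_between (lt_min hcr hf1)
    have hcont : Continuous f :=
      EMetric.continuous_infEdist.comp (continuous_id.smul continuous_const)
    have hf0 : f 0 = 0 := by
      simp [hf, EMetric.infEdist, EMetric.infEdist_zero_of_mem (M.zero_mem : (0:X) ∈ (M : Set X))]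
    have hmem : c'' ∈ Set.Icc (f 0) (f 1) :=
      ⟨by simp [hf0], le_of_lt (hc2.trans_le (min_le_right _ _))⟩
    obtain ⟨t, _, htc⟩ := intermediate_value_Icc (zero_le_one) hcont.continuousOn hmem
    have hlt : EMetric.infEdist (t • x) (M : Set X) < ENNReal.ofReal r := by
      show f t < _
      rw [htc]
      exact hc2.trans_le (min_le_left _ _)
    obtain ⟨m, hmM, hdm⟩ := EMetric.infEdist_lt_iff.mp hlt
    set b := t • x - m with hb
    have hdist : dist b 0 = dist (t • x) m := by
      have := hinv b 0 m
      simpa [hb, sub_add_cancel] using this.symm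
    have hbball : b ∈ closedBall (0 : X) r := by
      rw [mem_closedBall, hdist]
      have h2 : ENNReal.ofReal (dist (t • x) m) < ENNReal.ofReal r := by
        rwa [← edist_dist]
      exact le_of_lt ((ENNReal.ofReal_lt_ofReal_iff hr).mp h2)
    have hbeq : EMetric.infEdist b (M : Set X) = c'' := by
      rw [hb, aux_sub_eq hinv M hmM]
      exact htc
    calc c < c'' := hc1
      _ = EMetric.infEdist b (M : Set X) := hbeq.symm
      _ ≤ ⨆ b ∈ closedBall (0 : X) r, EMetric.infEdist b (M : Set X) :=
          le_iSup₂ (f := fun b _ => EMetric.infEdist b (M : Set X)) b hbball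
end

section
/- Let (X,d) be an F-space with non-decreasing translation-invariant metric and let {A_n} be a non-trivial linear approximation scheme on X (each A_n is a closed proper linear subspace). Then {A_n} satisfies Shapiro's theorem on X if and only if inf_{n∈ℕ} E(X,A_n) > 0. -/
open Filter Metric ENNReal Topology

section Aux

variable {X : Type*} [AddCommGroup X] [Module ℝ X] [MetricSpace X]

private lemma aux_le_add {a b : ℝ} (h : ∀ δ : ℝ, 0 < δ → a ≤ b + δ) : a ≤ b := by
  by_contra hc
  push_neg at hc
  have := h ((a - b) / 2) (by linarith)
  linarith

private lemma dist_shift (hinv : ∀ x y z : X, dist (x + z) (y + z) = dist x y) (x y : X) :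
    dist x y = dist (x - y) 0 := by
  have h := hinv (x - y) 0 y
  simpa using h

private lemma dist_neg_zero (hinv : ∀ x y z : X, dist (x + z) (y + z) = dist x y) (x : X) :
    dist (-x) 0 = dist x 0 := by
  have h := hinv (-x) 0 x
  simp at h
  rw [← h, dist_comm]

private lemma dist_add_add (hinv : ∀ x y z : X, dist (x + z) (y + z) = dist x y)
    (u v a b : X) : dist (u + v) (a + b) ≤ dist u a + dist v b := by
  rw [dist_shift hinv (u + v) (a + b)]
  have he : u + v - (a + b) = (u - a) + (v - b) := by abel
  rw [he]
  calc dist ((u - a) + (v - b)) 0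
      ≤ dist ((u - a) + (v - b)) (v - b) + dist (v - b) 0 := dist_triangle _ _ _
    _ = dist (u - a) 0 + dist (v - b) 0 := by
        have h := hinv (u - a) 0 (v - b)
        rw [zero_add] at h
        rw [h]
    _ = dist u a + dist v b := by
        rw [← dist_shift hinv u a, ← dist_shift hinv v b]

private lemma infDist_add_le (hinv : ∀ x y z : X, dist (x + z) (y + z) = dist x y)
    (M : Submodule ℝ X) (u v : X) :
    infDist (u + v) (M : Set X) ≤ infDist u (M : Set X) + infDist v (M : Set X) := by
  have hne : (M : Set X).Nonempty := ⟨0, M.zero_mem⟩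
  refine aux_le_add fun δ hδ => ?_
  obtain ⟨a, ha, hda⟩ := (infDist_lt_iff hne).mp
    (show infDist u (M : Set X) < infDist u (M : Set X) + δ / 2 by linarith)
  obtain ⟨b, hb, hdb⟩ := (infDist_lt_iff hne).mp
    (show infDist v (M : Set X) < infDist v (M : Set X) + δ / 2 by linarith)
  have h1 : infDist (u + v) (M : Set X) ≤ dist (u + v) (a + b) :=
    infDist_le_dist_of_mem (M.add_mem ha hb)
  have h2 := dist_add_add hinv u v a b
  linarith

private lemma infDist_neg (hinv : ∀ x y z : X, dist (x + z) (y + z) = dist x y)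
    (M : Submodule ℝ X) (u : X) :
    infDist (-u) (M : Set X) = infDist u (M : Set X) := by
  have hne : (M : Set X).Nonempty := ⟨0, M.zero_mem⟩
  have key : ∀ w : X, infDist (-w) (M : Set X) ≤ infDist w (M : Set X) := by
    intro w
    refine aux_le_add fun δ hδ => ?_
    obtain ⟨a, ha, hda⟩ := (infDist_lt_iff hne).mp
      (show infDist w (M : Set X) < infDist w (M : Set X) + δ by linarith)
    have h1 : infDist (-w) (M : Set X) ≤ dist (-w) (-a) :=
      infDist_le_dist_of_mem (M.neg_mem ha)
    have h2 : dist (-w) (-a) = dist w a := by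
      rw [dist_shift hinv (-w) (-a), dist_shift hinv w a]
      have : -w - -a = -(w - a) := by abel
      rw [this, dist_neg_zero hinv]
    linarith
  refine le_antisymm (key u) ?_
  have := key (-u)
  rwa [neg_neg] at this

private lemma infDist_sub_mem (hinv : ∀ x y z : X, dist (x + z) (y + z) = dist x y)
    (M : Submodule ℝ X) {m : X} (hm : m ∈ M) (w : X) :
    infDist (w - m) (M : Set X) = infDist w (M : Set X) := by
  have hne : (M : Set X).Nonempty := ⟨0, M.zero_mem⟩
  have key : ∀ (w m : X), m ∈ M → infDist (w - m) (M : Set X) ≤ infDist w (M : Set X) := by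
    intro w m hm
    refine aux_le_add fun δ hδ => ?_
    obtain ⟨a, ha, hda⟩ := (infDist_lt_iff hne).mp
      (show infDist w (M : Set X) < infDist w (M : Set X) + δ by linarith)
    have h1 : infDist (w - m) (M : Set X) ≤ dist (w - m) (a - m) :=
      infDist_le_dist_of_mem (M.sub_mem ha hm)
    have h2 : dist (w - m) (a - m) = dist w a := by
      rw [dist_shift hinv (w - m) (a - m), dist_shift hinv w a]
      have : w - m - (a - m) = w - a := by abel
      rw [this]
    linarith
  refine le_antisymm (key w m hm) ?_
  have := key (w - m) (-m) (M.neg_mem hm)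
  have he : w - m - -m = w := by abel
  rwa [he] at this

private lemma exists_near (hinv : ∀ x y z : X, dist (x + z) (y + z) = dist x y)
    [ContinuousSMul ℝ X] (M : Submodule ℝ X) {x : X} {c ρ : ℝ}
    (hc0 : 0 < c) (hcρ : c < ρ) (hx : c < infDist x (M : Set X)) :
    ∃ z : X, dist z 0 < ρ ∧ c ≤ infDist z (M : Set X) := by
  have hne : (M : Set X).Nonempty := ⟨0, M.zero_mem⟩
  have hcont : ContinuousOn (fun α : ℝ => infDist (α • x) (M : Set X)) (Set.Icc 0 1) :=
    ((continuous_infDist_pt (M : Set X)).comp (continuous_id.smul continuous_const)).continuousOn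
  have hmem : c ∈ Set.Icc ((fun α : ℝ => infDist (α • x) (M : Set X)) 0)
      ((fun α : ℝ => infDist (α • x) (M : Set X)) 1) := by
    constructor
    · simp [infDist_zero_of_mem M.zero_mem, hc0.le]
    · simpa using hx.le
  obtain ⟨α, -, hα⟩ := intermediate_value_Icc (by norm_num : (0 : ℝ) ≤ 1) hcont hmem
  have hα' : infDist (α • x) (M : Set X) = c := hα
  have hαρ : infDist (α • x) (M : Set X) < ρ := by rw [hα']; exact hcρ
  obtain ⟨m, hm, hdm⟩ := (infDist_lt_iff hne).mp hαρ
  refine ⟨α • x - m, ?_, ?_⟩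
  · rw [← dist_shift hinv (α • x) m]
    exact hdm
  · rw [infDist_sub_mem hinv M hm, hα']

end Aux

/-- **Albinus's theorem.** Let `X` be an F-space with non-decreasing
translation-invariant metric and `{A_n}` a non-trivial linear approximation scheme
(closed proper subspaces, strictly increasing, with dense union). Then `{A_n}`
satisfies Shapiro's theorem on `X` iff `inf_n E(X, A_n) > 0`. -/
theorem albinus_theorem {X : Type*} [AddCommGroup X] [Module ℝ X] [MetricSpace X]
    [IsTopologicalAddGroup X] [ContinuousSMul ℝ X] [CompleteSpace X]
    (hinv : ∀ x y z : X, dist (x + z) (y + z) = dist x y)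
    (hnd : ∀ (α : ℝ) (x : X), 0 ≤ α → α ≤ 1 → dist (α • x) 0 ≤ dist x 0)
    (A : ℕ → Submodule ℝ X)
    (hclosed : ∀ n, IsClosed (A n : Set X))
    (hproper : ∀ n, A n ≠ ⊤)
    (hchain : ∀ n, A n < A (n + 1))
    (hdense : Dense (⋃ n, (A n : Set X))) :
    (∀ ε : ℕ → ℝ, (∀ n, 0 ≤ ε n) → Antitone ε → Tendsto ε atTop (nhds 0) →
        ∃ x : X, ¬ ∃ C : ℝ, ∀ n, infDist x (A n : Set X) ≤ C * ε n) ↔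
      0 < ⨅ n : ℕ, ⨆ x : X, EMetric.infEdist x (A n : Set X) := by
  set E : ℕ → ℝ≥0∞ := fun n => ⨆ x : X, EMetric.infEdist x (A n : Set X) with hE
  have hAmono : Monotone A := monotone_nat_of_le_succ fun n => (hchain n).le
  have hEanti : Antitone E := by
    intro n m hnm
    exact iSup_mono fun x =>
      EMetric.infEdist_anti (SetLike.coe_subset_coe.mpr (hAmono hnm))
  have hfin : ∀ (n : ℕ) (x : X), EMetric.infEdist x (A n : Set X) ≠ ⊤ := fun n x =>
    ne_top_of_le_ne_top (edist_ne_top x 0)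
      (EMetric.infEdist_le_edist_of_mem (A n).zero_mem)
  constructor
  · -- Shapiro ⇒ inf > 0, by contraposition
    intro hSh
    by_contra h
    push_neg at h
    have hI0 : ⨅ n, E n = 0 := le_antisymm h zero_le
    have htendE : Tendsto E atTop (𝓝 0) := hI0 ▸ tendsto_atTop_iInf hEanti
    set ε : ℕ → ℝ := fun n => (min (E n) 1).toReal + (1 / 2) ^ n with hεdef
    have hmintop : ∀ n, min (E n) 1 ≠ ⊤ := fun n =>
      ne_top_of_le_ne_top (by norm_num) (min_le_right _ _)
    have hεpos : ∀ n, 0 < ε n := fun n =>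
      add_pos_of_nonneg_of_pos ENNReal.toReal_nonneg (by positivity)
    have hεanti : Antitone ε := by
      intro n m hnm
      refine add_le_add ?_ ?_
      · exact ENNReal.toReal_mono (hmintop n) (min_le_min (hEanti hnm) le_rfl)
      · exact pow_le_pow_of_le_one (by norm_num) (by norm_num) hnm
    have hεtend : Tendsto ε atTop (𝓝 0) := by
      have h1 : Tendsto (fun n => min (E n) 1) atTop (𝓝 0) := by
        refine tendsto_of_tendsto_of_tendsto_of_le_of_le tendsto_const_nhds htendE
          (fun n => zero_le) fun n => min_le_left _ _
      have h2 : Tendsto (fun n => (min (E n) 1).toReal) atTop (𝓝 0) := by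
        have := (ENNReal.tendsto_toReal (by norm_num : (0 : ℝ≥0∞) ≠ ⊤)).comp h1
        exact this
      have h3 : Tendsto (fun n : ℕ => ((1 : ℝ) / 2) ^ n) atTop (𝓝 0) :=
        tendsto_pow_atTop_nhds_zero_of_lt_one (by norm_num) (by norm_num)
      simpa [hεdef, one_div, inv_pow] using h2.add h3
    obtain ⟨x, hx⟩ := hSh ε (fun n => (hεpos n).le) hεanti hεtend
    apply hx
    obtain ⟨N, hN⟩ : ∃ N, E N < 1 := by
      have : ⨅ n, E n < 1 := by rw [hI0]; norm_num
      exact iInf_lt_iff.mp this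
    have hsmall : ∀ n, N ≤ n → infDist x (A n : Set X) ≤ ε n := by
      intro n hn
      have hE1 : E n < 1 := lt_of_le_of_lt (hEanti hn) hN
      have h1 : EMetric.infEdist x (A n : Set X) ≤ min (E n) 1 :=
        le_min (le_iSup (fun y : X => EMetric.infEdist y (A n : Set X)) x)
          ((le_iSup (fun y : X => EMetric.infEdist y (A n : Set X)) x).trans hE1.le)
      have h2 : infDist x (A n : Set X) ≤ (min (E n) 1).toReal :=
        ENNReal.toReal_mono (hmintop n) h1
      have : (0 : ℝ) ≤ (1 / 2) ^ n := by positivity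
      calc infDist x (A n : Set X) ≤ (min (E n) 1).toReal := h2
        _ ≤ ε n := le_add_of_nonneg_right this
    refine ⟨1 + ∑ i ∈ Finset.range N, infDist x (A i : Set X) / ε i, fun n => ?_⟩
    have hsumnn : (0 : ℝ) ≤ ∑ i ∈ Finset.range N, infDist x (A i : Set X) / ε i :=
      Finset.sum_nonneg fun i _ => div_nonneg infDist_nonneg (hεpos i).le
    rcases lt_or_ge n N with hn | hn
    · have hterm : infDist x (A n : Set X) / ε n ≤
          ∑ i ∈ Finset.range N, infDist x (A i : Set X) / ε i :=
        Finset.single_le_sum (f := fun i => infDist x (A i : Set X) / ε i)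
          (fun i _ => div_nonneg infDist_nonneg (hεpos i).le) (Finset.mem_range.mpr hn)
      have h1 : infDist x (A n : Set X) = (infDist x (A n : Set X) / ε n) * ε n :=
        (div_mul_cancel₀ _ (hεpos n).ne').symm
      rw [h1]
      exact mul_le_mul_of_nonneg_right (by linarith) (hεpos n).le
    · calc infDist x (A n : Set X) ≤ ε n := hsmall n hn
        _ = 1 * ε n := (one_mul _).symm
        _ ≤ (1 + ∑ i ∈ Finset.range N, infDist x (A i : Set X) / ε i) * ε n :=
          mul_le_mul_of_nonneg_right (by linarith) (hεpos n).le
  · -- inf > 0 ⇒ Shapiro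
    intro hI ε hε0 hεanti hεtend
    by_contra hx
    push_neg at hx
    set F : ℕ → Set X := fun k => {y | ∀ n, infDist y (A n : Set X) ≤ (k : ℝ) * ε n} with hF
    have hFclosed : ∀ k, IsClosed (F k) := by
      intro k
      have : F k = ⋂ n, {y | infDist y (A n : Set X) ≤ (k : ℝ) * ε n} := by
        ext y; simp [hF, Set.mem_iInter]
      rw [this]
      exact isClosed_iInter fun n =>
        isClosed_le (continuous_infDist_pt _) continuous_const
    have hcover : ⋃ k, F k = Set.univ := by
      ext y
      simp only [Set.mem_iUnion, Set.mem_univ, iff_true]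
      obtain ⟨C, hC⟩ := hx y
      refine ⟨⌈C⌉₊, fun n => (hC n).trans ?_⟩
      exact mul_le_mul_of_nonneg_right (Nat.le_ceil C) (hε0 n)
    obtain ⟨k, hk⟩ := nonempty_interior_of_iUnion_of_closed hFclosed hcover
    obtain ⟨x0, hx0⟩ := hk
    obtain ⟨ρ, hρ0, hball⟩ := Metric.mem_nhds_iff.mp (mem_interior_iff_mem_nhds.mp hx0)
    have hbound : ∀ y, dist y 0 < ρ → ∀ n, infDist y (A n : Set X) ≤ 2 * (k : ℝ) * ε n := by
      intro y hy n
      have hm1 : x0 + y ∈ Metric.ball x0 ρ := by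
        have hd : dist (x0 + y) x0 = dist y 0 := by
          have := hinv y 0 x0
          simpa [add_comm] using this
        simpa [Metric.mem_ball, hd] using hy
      have hy1 := hball hm1 n
      have hy2 := hball (Metric.mem_ball_self hρ0) n
      have hsub : infDist y (A n : Set X) ≤
          infDist (x0 + y) (A n : Set X) + infDist (-x0) (A n : Set X) := by
        have := infDist_add_le hinv (A n) (x0 + y) (-x0)
        have he : x0 + y + -x0 = y := by abel
        rwa [he] at this
      rw [infDist_neg hinv] at hsub
      linarith
    -- choose c
    have hb : (0 : ℝ≥0∞) < min (min (⨅ n, E n) (ENNReal.ofReal ρ)) 1 :=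
      lt_min (lt_min hI (ENNReal.ofReal_pos.mpr hρ0)) one_pos
    obtain ⟨c', hc'0, hc'b⟩ := exists_between hb
    have hc'top : c' ≠ ⊤ :=
      ne_top_of_lt (lt_of_lt_of_le hc'b ((min_le_right _ _).trans le_top))
    set c := c'.toReal with hcdef
    have hc0 : 0 < c := ENNReal.toReal_pos hc'0.ne' hc'top
    have hcρ : c < ρ := by
      have h1 : c' < ENNReal.ofReal ρ :=
        hc'b.trans_le ((min_le_left _ _).trans (min_le_right _ _))
      exact (ENNReal.lt_ofReal_iff_toReal_lt hc'top).mp h1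
    have hcI : ∀ n, ENNReal.ofReal c < E n := by
      intro n
      have h1 : c' < ⨅ m, E m :=
        hc'b.trans_le ((min_le_left _ _).trans (min_le_left _ _))
      have h2 : c' < E n := h1.trans_le (iInf_le _ n)
      rwa [hcdef, ENNReal.ofReal_toReal hc'top]
    have hfinal : ∀ n, c ≤ 2 * (k : ℝ) * ε n := by
      intro n
      obtain ⟨x, hxlt⟩ := lt_iSup_iff.mp (hcI n)
      have hclt : c < infDist x (A n : Set X) := by
        have := (ENNReal.ofReal_lt_iff_lt_toReal hc0.le (hfin n x)).mp hxlt
        exact this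
      obtain ⟨z, hz1, hz2⟩ := exists_near hinv (A n) hc0 hcρ hclt
      exact hz2.trans (hbound z hz1 n)
    have htend2 : Tendsto (fun n => 2 * (k : ℝ) * ε n) atTop (𝓝 0) := by
      simpa using hεtend.const_mul (2 * (k : ℝ))
    have : c ≤ 0 := ge_of_tendsto' htend2 hfinal
    linarith
end

section
/- Let X be an F-space with non-decreasing translation-invariant metric, ‖x‖ := d(x,0), and let {X_n} be a nontrivial linear approximation scheme on X with dim X_n < ∞ for all n. Define the radius R(V) = inf_{v∈V∖{0}} sup_{t>0} ‖tv‖ for a subspace V. If R(⋃_n X_n) > 0, then inf_n E(X,X_n) > 0, and hence {X_n} satisfies Shapiro's theorem. -/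
open Filter Metric

section Aux

variable {X : Type*} [AddCommGroup X] [Module ℝ X]
    [MetricSpace X] [IsTopologicalAddGroup X] [ContinuousSMul ℝ X]

lemma key_construction
    (hinv : ∀ x y z : X, dist (x + z) (y + z) = dist x y)
    (hnd : ∀ (α : ℝ) (x : X), 0 ≤ α → α ≤ 1 → dist (α • x) 0 ≤ dist x 0)
    (Y Z : Submodule ℝ X) [FiniteDimensional ℝ Y] (hZY : Z < Y)
    {r : ℝ} (hr : 0 < r)
    (hH : ∀ v : X, v ∈ Y → dist v 0 ≤ r → infDist v (Z : Set X) ≤ r / 4) :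
    ∃ ω : X, ω ∈ Y ∧ ω ≠ 0 ∧ ∀ t : ℝ, 0 < t → dist (t • ω) 0 ≤ r := by
  classical
  set d := Module.finrank ℝ Y with hd
  have hcond : Module.finrank ℝ Y = Module.finrank ℝ (Fin d → ℝ) :=
    (Module.finrank_fin_fun ℝ).symm
  set e : Y ≃L[ℝ] (Fin d → ℝ) := ContinuousLinearEquiv.ofFinrankEq hcond with he
  by_cases hbd : ∀ P : ℝ, ∃ v : Y, dist (v : X) 0 ≤ r ∧ P < ‖e v‖
  · -- unbounded case: d-ball in Y is Euclid-unbounded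
    choose v hv1 hv2 using fun k : ℕ => hbd k
    set u : ℕ → Y := fun k => (‖e (v k)‖)⁻¹ • v k with hu
    have hnorm_pos : ∀ k : ℕ, 0 < ‖e (v k)‖ := fun k =>
      lt_of_le_of_lt (Nat.cast_nonneg k) (hv2 k)
    have huS : ∀ k, u k ∈ (⇑e ⁻¹' (sphere (0 : Fin d → ℝ) 1)) := by
      intro k
      have hk := hnorm_pos k
      simp only [hu, Set.mem_preimage, map_smul, mem_sphere_iff_norm, sub_zero, norm_smul,
        norm_inv, norm_norm]
      exact inv_mul_cancel₀ hk.ne'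
    have hcpt : IsCompact (⇑e ⁻¹' (sphere (0 : Fin d → ℝ) 1)) :=
      e.toHomeomorph.isCompact_preimage.2 (isCompact_sphere 0 1)
    obtain ⟨ω, hωS, ψ, hψmono, hψlim⟩ := hcpt.tendsto_subseq huS
    have hω0 : ω ≠ 0 := by
      intro h
      rw [h] at hωS
      simp [Set.mem_preimage, mem_sphere_iff_norm] at hωS
    refine ⟨(ω : X), ω.2, by simpa using hω0, ?_⟩
    intro t ht
    have hcont : Continuous fun w : Y => dist (t • (w : X)) 0 :=
      (continuous_subtype_val.const_smul t).dist continuous_const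
    have hlim : Tendsto (fun j => dist (t • ((u (ψ j) : Y) : X)) 0) atTop
        (nhds (dist (t • (ω : X)) 0)) := (hcont.tendsto ω).comp hψlim
    refine le_of_tendsto hlim ?_
    filter_upwards [eventually_ge_atTop (Nat.ceil t)] with j hj
    have hk : t ≤ ‖e (v (ψ j))‖ := by
      have h1 : (Nat.ceil t : ℝ) ≤ (ψ j : ℝ) := by
        exact_mod_cast le_trans hj (hψmono.le_apply)
      have h2 := hv2 (ψ j)
      have h3 := Nat.le_ceil t
      linarith
    have hα0 : 0 ≤ t / ‖e (v (ψ j))‖ := div_nonneg ht.le (norm_nonneg _)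
    have hα1 : t / ‖e (v (ψ j))‖ ≤ 1 := by
      rw [div_le_one (lt_of_lt_of_le ht hk)]
      exact hk
    have hcoe : ((u (ψ j) : Y) : X) = (‖e (v (ψ j))‖)⁻¹ • ((v (ψ j) : Y) : X) := by
      simp [hu]
    calc dist (t • ((u (ψ j) : Y) : X)) 0
        = dist ((t / ‖e (v (ψ j))‖) • ((v (ψ j) : Y) : X)) 0 := by
          rw [hcoe, smul_smul, div_eq_mul_inv]
      _ ≤ dist ((v (ψ j) : Y) : X) 0 := hnd _ _ hα0 hα1
      _ ≤ r := hv1 _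
  · -- bounded case: derive a contradiction
    exfalso
    push_neg at hbd
    obtain ⟨P, hP⟩ := hbd
    obtain ⟨y₀, hy₀Y, hy₀Z⟩ := SetLike.exists_of_lt hZY
    have hZ'lt : Z.comap Y.subtype < ⊤ := by
      rw [lt_top_iff_ne_top]
      intro h
      exact hy₀Z (by simpa using (h ▸ Submodule.mem_top : (⟨y₀, hy₀Y⟩ : Y) ∈ Z.comap Y.subtype))
    obtain ⟨φ, hφne, hφker⟩ := Submodule.exists_le_ker_of_lt_top _ hZ'lt
    obtain ⟨y₁, hy₁0⟩ := DFunLike.ne_iff.mp hφne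
    have hy₁ : φ y₁ ≠ 0 := by simpa using hy₁0
    set L : (Fin d → ℝ) →L[ℝ] ℝ :=
      LinearMap.toContinuousLinearMap (φ.comp (e.symm.toLinearEquiv.toLinearMap)) with hL
    have hφL : ∀ w : Y, φ w = L (e w) := by
      intro w
      simp only [hL, LinearMap.coe_toContinuousLinearMap', LinearMap.coe_comp,
        Function.comp_apply, LinearEquiv.coe_coe, ContinuousLinearEquiv.coe_toLinearEquiv]
      rw [e.symm_apply_apply]
    -- small starting point
    have hcont0 : Continuous fun t : ℝ => dist (t • ((y₁ : Y) : X)) 0 :=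
      (continuous_id.smul continuous_const).dist continuous_const
    have h0 : Tendsto (fun t : ℝ => dist (t • ((y₁ : Y) : X)) 0) (nhds 0) (nhds 0) := by
      have := hcont0.tendsto 0
      simpa using this
    have hev : ∀ᶠ t : ℝ in nhds 0, dist (t • ((y₁ : Y) : X)) 0 < r / 2 :=
      h0.eventually_lt_const (by linarith)
    obtain ⟨η, hη, hballη⟩ := Metric.eventually_nhds_iff.mp hev
    set t₁ : ℝ := η / 2 with ht₁def
    have ht₁ : 0 < t₁ := by positivity
    have hw₀ : dist (t₁ • ((y₁ : Y) : X)) 0 < r / 2 := by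
      refine hballη ?_
      rw [Real.dist_eq, sub_zero, abs_of_pos ht₁]
      simp only [ht₁def]
      linarith
    set c : ℝ := t₁ * φ y₁ with hc
    have hcne : c ≠ 0 := mul_ne_zero ht₁.ne' hy₁
    -- recursive doubling sequence
    have hseq : ∀ j : ℕ, ∃ w : Y, dist ((w : Y) : X) 0 ≤ r / 2 ∧ φ w = 2 ^ j * c := by
      intro j
      induction j with
      | zero =>
        refine ⟨t₁ • y₁, ?_, ?_⟩
        · simpa using hw₀.le
        · simp [hc, map_smul]
      | succ j ih =>
        obtain ⟨w, hwn, hwφ⟩ := ih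
        have h2w : dist (((w : Y) : X) + ((w : Y) : X)) 0 ≤ r := by
          calc dist (((w : Y) : X) + ((w : Y) : X)) 0
              ≤ dist (((w : Y) : X) + ((w : Y) : X)) ((0 : X) + ((w : Y) : X))
                + dist ((0 : X) + ((w : Y) : X)) 0 := dist_triangle _ _ _
            _ = dist ((w : Y) : X) 0 + dist ((w : Y) : X) 0 := by
                rw [hinv, zero_add]
            _ ≤ r := by linarith
        have hmem : ((w : Y) : X) + ((w : Y) : X) ∈ Y := Y.add_mem w.2 w.2
        have hid := hH _ hmem h2w
        have hne : (Z : Set X).Nonempty := ⟨0, Z.zero_mem⟩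
        have hlt : infDist (((w : Y) : X) + ((w : Y) : X)) (Z : Set X) < r / 2 :=
          lt_of_le_of_lt hid (by linarith)
        obtain ⟨a, haZ, ha⟩ := (infDist_lt_iff hne).mp hlt
        refine ⟨w + w - ⟨a, hZY.le haZ⟩, ?_, ?_⟩
        · have hcoe : (((w + w - ⟨a, hZY.le haZ⟩ : Y) : Y) : X)
              = (((w : Y) : X) + ((w : Y) : X)) - a := by
            push_cast
            ring
          rw [hcoe]
          have h5 := hinv ((((w : Y) : X) + ((w : Y) : X)) - a) 0 a
          rw [sub_add_cancel, zero_add] at h5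
          rw [← h5]
          exact ha.le
        · have haφ : φ (⟨a, hZY.le haZ⟩ : Y) = 0 := by
            have : (⟨a, hZY.le haZ⟩ : Y) ∈ Z.comap Y.subtype := by
              simpa using haZ
            simpa using hφker this
          rw [map_sub, map_add, haφ, hwφ]
          ring
    obtain ⟨j, hj⟩ := pow_unbounded_of_one_lt ((‖L‖ * P) / |c|) one_lt_two
    obtain ⟨w, hwn, hwφ⟩ := hseq j
    have hwr : dist ((w : Y) : X) 0 ≤ r := le_trans hwn (by linarith)
    have h1 : |φ w| ≤ ‖L‖ * P := by
      rw [hφL]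
      calc |L (e w)| = ‖L (e w)‖ := (Real.norm_eq_abs _).symm
        _ ≤ ‖L‖ * ‖e w‖ := L.le_opNorm _
        _ ≤ ‖L‖ * P := by
            have := hP w hwr
            exact mul_le_mul_of_nonneg_left this (norm_nonneg _)
    have h2 : |φ w| = 2 ^ j * |c| := by
      rw [hwφ, abs_mul, abs_pow]
      norm_num
    have hcpos : 0 < |c| := abs_pos.mpr hcne
    rw [div_lt_iff₀ hcpos] at hj
    have : (2 : ℝ) ^ j * |c| ≤ ‖L‖ * P := h2 ▸ h1
    linarith

end Aux

/-- Let `X` be an F-space with non-decreasing translation-invariant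
metric and `{X_n}` a nontrivial linear approximation scheme with `dim X_n < ∞`.
If the radius `R(⋃_n X_n) = inf_{v ≠ 0} sup_{t>0} ‖t v‖` is positive, then
`inf_n E(X, X_n) > 0` and `{X_n}` satisfies Shapiro's theorem. -/
theorem radius_pos_implies_shapiro {X : Type*} [AddCommGroup X] [Module ℝ X]
    [MetricSpace X] [IsTopologicalAddGroup X] [ContinuousSMul ℝ X] [CompleteSpace X]
    (hinv : ∀ x y z : X, dist (x + z) (y + z) = dist x y)
    (hnd : ∀ (α : ℝ) (x : X), 0 ≤ α → α ≤ 1 → dist (α • x) 0 ≤ dist x 0)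
    (A : ℕ → Submodule ℝ X)
    (hfin : ∀ n, FiniteDimensional ℝ (A n))
    (hproper : ∀ n, A n ≠ ⊤)
    (hchain : ∀ n, A n < A (n + 1))
    (hdense : Dense (⋃ n, (A n : Set X)))
    (hradius : 0 < ⨅ v ∈ {v : X | v ∈ (⋃ n, (A n : Set X)) ∧ v ≠ 0},
        ⨆ t ∈ Set.Ioi (0 : ℝ), edist (t • v) 0) :
    (0 < ⨅ n : ℕ, ⨆ x : X, EMetric.infEdist x (A n : Set X)) ∧
      (∀ ε : ℕ → ℝ, (∀ n, 0 ≤ ε n) → Antitone ε → Tendsto ε atTop (nhds 0) →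
        ∃ x : X, ¬ ∃ C : ℝ, ∀ n, infDist x (A n : Set X) ≤ C * ε n) := by
  classical
  -- a real number below the radius
  obtain ⟨r, hr0', hr0, hrρ⟩ :
      ∃ r : ℝ, 0 ≤ r ∧ (0 : ENNReal) < ENNReal.ofReal r ∧ ENNReal.ofReal r
        < ⨅ v ∈ {v : X | v ∈ (⋃ n, (A n : Set X)) ∧ v ≠ 0},
            ⨆ t ∈ Set.Ioi (0 : ℝ), edist (t • v) 0 :=
    ENNReal.lt_iff_exists_real_btwn.mp hradius
  have hrpos : 0 < r := ENNReal.ofReal_pos.mp hr0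
  -- given ω from the key construction with bound r' ≤ r, contradict the radius
  have hcontra : ∀ r' : ℝ, r' ≤ r → ∀ ω : X, ω ∈ (⋃ n, (A n : Set X)) → ω ≠ 0 →
      (∀ t : ℝ, 0 < t → dist (t • ω) 0 ≤ r') → False := by
    intro r' hr'r ω hmem hne hray
    have hle : (⨅ v ∈ {v : X | v ∈ (⋃ n, (A n : Set X)) ∧ v ≠ 0},
        ⨆ t ∈ Set.Ioi (0 : ℝ), edist (t • v) 0) ≤ ENNReal.ofReal r := by
      refine le_trans (iInf₂_le ω ⟨hmem, hne⟩) ?_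
      refine iSup₂_le fun t ht => ?_
      rw [edist_dist]
      exact ENNReal.ofReal_le_ofReal (le_trans (hray t ht) hr'r)
    exact absurd (lt_of_le_of_lt hle hrρ) (lt_irrefl _)
  constructor
  · -- Part 1
    by_contra hc
    have h0 : (⨅ n : ℕ, ⨆ x : X, EMetric.infEdist x (A n : Set X)) = 0 := by
      simpa [pos_iff_ne_zero] using hc
    have hlt : (⨅ n : ℕ, ⨆ x : X, EMetric.infEdist x (A n : Set X))
        < ENNReal.ofReal (r / 4) := by
      rw [h0]
      exact ENNReal.ofReal_pos.2 (by linarith)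
    obtain ⟨m, hm⟩ := iInf_lt_iff.mp hlt
    have hH : ∀ v : X, v ∈ A (m + 1) → dist v 0 ≤ r →
        infDist v ((A m : Set X)) ≤ r / 4 := by
      intro v _ _
      have h1 : EMetric.infEdist v (A m : Set X) < ENNReal.ofReal (r / 4) :=
        lt_of_le_of_lt (le_iSup (fun x : X => EMetric.infEdist x (A m : Set X)) v) hm
      exact ENNReal.toReal_le_of_le_ofReal (by linarith) h1.le
    haveI := hfin (m + 1)
    obtain ⟨ω, hω1, hω2, hω3⟩ :=
      key_construction hinv hnd (A (m + 1)) (A m) (hchain m) hrpos hH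
    exact absurd (hcontra r le_rfl ω (Set.mem_iUnion.2 ⟨m + 1, hω1⟩) hω2 hω3) not_false
  · -- Part 2
    intro ε hε0 hanti htend
    by_contra hcon
    push_neg at hcon
    set F : ℕ → Set X := fun k => {x | ∀ n, infDist x ((A n : Set X)) ≤ (k : ℝ) * ε n}
      with hF
    have hFclosed : ∀ k, IsClosed (F k) := by
      intro k
      have : F k = ⋂ n, {x : X | infDist x ((A n : Set X)) ≤ (k : ℝ) * ε n} := by
        ext x; simp [hF, Set.mem_iInter]
      rw [this]
      exact isClosed_iInter fun n =>
        isClosed_le (continuous_infDist_pt _) continuous_const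
    have hFcover : (⋃ k, F k) = Set.univ := by
      ext x
      simp only [Set.mem_iUnion, Set.mem_univ, iff_true]
      obtain ⟨C, hC⟩ := hcon x
      exact ⟨Nat.ceil C, fun n =>
        le_trans (hC n) (mul_le_mul_of_nonneg_right (Nat.le_ceil C) (hε0 n))⟩
    haveI : Nonempty X := ⟨0⟩
    obtain ⟨k, hk⟩ := nonempty_interior_of_iUnion_of_closed hFclosed hFcover
    obtain ⟨x₀, hx₀⟩ := hk
    obtain ⟨r₀, hr₀, hball⟩ := Metric.isOpen_iff.mp isOpen_interior x₀ hx₀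
    have hx₀F : x₀ ∈ F k := interior_subset hx₀
    -- approximation on the small ball around 0
    have hballF : ∀ v : X, dist v 0 < r₀ → ∀ n,
        infDist v ((A n : Set X)) ≤ 2 * (k : ℝ) * ε n := by
      intro v hv n
      have hvx : x₀ + v ∈ F k := by
        refine interior_subset (hball ?_)
        rw [mem_ball]
        calc dist (x₀ + v) x₀ = dist (v + x₀) (0 + x₀) := by rw [add_comm, zero_add]
          _ = dist v 0 := hinv _ _ _
          _ < r₀ := hv
      have hne : ((A n : Set X)).Nonempty := ⟨0, (A n).zero_mem⟩
      by_contra hgt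
      push_neg at hgt
      set δ : ℝ := (infDist v ((A n : Set X)) - 2 * (k : ℝ) * ε n) / 2 with hδ
      have hδ0 : 0 < δ := by
        simp only [hδ]
        linarith
      obtain ⟨a, haA, ha⟩ := (infDist_lt_iff hne).mp
        (lt_of_le_of_lt (hvx n) (by linarith : (k : ℝ) * ε n < (k : ℝ) * ε n + δ))
      obtain ⟨b, hbA, hb⟩ := (infDist_lt_iff hne).mp
        (lt_of_le_of_lt (hx₀F n) (by linarith : (k : ℝ) * ε n < (k : ℝ) * ε n + δ))
      have h3 : infDist v ((A n : Set X)) ≤ dist v (a - b) :=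
        infDist_le_dist_of_mem ((A n).sub_mem haA hbA)
      have h4 : dist v (a - b) = dist (v + b) a := by
        have h := hinv v (a - b) b
        rw [sub_add_cancel] at h
        rw [← h]
      have h5 : dist (v + b) a ≤ dist b x₀ + dist (x₀ + v) a := by
        calc dist (v + b) a ≤ dist (v + b) (x₀ + v) + dist (x₀ + v) a := dist_triangle _ _ _
          _ = dist (b + v) (x₀ + v) + dist (x₀ + v) a := by rw [add_comm v b]
          _ = dist b x₀ + dist (x₀ + v) a := by rw [hinv]
      have h6 : dist b x₀ = dist x₀ b := dist_comm _ _
      have := hvx n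
      simp only [hδ] at ha hb
      linarith [h3, h4 ▸ h3]
    -- choose a level with small enough approximation error
    set r' : ℝ := min r (r₀ / 2) with hr'
    have hr'0 : 0 < r' := lt_min hrpos (by linarith)
    have htend2 : Tendsto (fun n => 2 * (k : ℝ) * ε n) atTop (nhds 0) := by
      simpa using htend.const_mul (2 * (k : ℝ))
    obtain ⟨m, hm⟩ := (htend2.eventually_lt_const
      (show (0 : ℝ) < r' / 4 by linarith)).exists
    have hH : ∀ v : X, v ∈ A (m + 1) → dist v 0 ≤ r' →
        infDist v ((A m : Set X)) ≤ r' / 4 := by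
      intro v _ hv
      have hvr₀ : dist v 0 < r₀ := by
        have h1 : r' ≤ r₀ / 2 := min_le_right _ _
        linarith
      exact le_trans (hballF v hvr₀ m) hm.le
    haveI := hfin (m + 1)
    obtain ⟨ω, hω1, hω2, hω3⟩ :=
      key_construction hinv hnd (A (m + 1)) (A m) (hchain m) hr'0 hH
    exact absurd (hcontra r' (min_le_left _ _) ω (Set.mem_iUnion.2 ⟨m + 1, hω1⟩) hω2 hω3)
      not_false
end

section
/- Let (X,d) be an F-space with non-decreasing translation-invariant metric and {A_n} an approximation scheme on X. Suppose there exist an infinite set ℕ_0 ⊆ ℕ, a bounded set {x_n}_{n∈ℕ_0} ⊆ X, and c > 0 such that c ≤ E(x_n, A_n) for all n ∈ ℕ_0. Then {A_n} satisfies Shapiro's theorem on X. -/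
open Filter Metric Pointwise

/-- Let `X` be an F-space with non-decreasing translation-invariant
metric and `{A_n}` an approximation scheme. If there are an infinite set `ℕ₀ ⊆ ℕ`,
a (topologically) bounded family `{x_n}_{n ∈ ℕ₀}` and `c > 0` with `c ≤ E(x_n, A_n)`
for all `n ∈ ℕ₀`, then `{A_n}` satisfies Shapiro's theorem on `X`. -/
theorem bounded_far_elements_implies_shapiro {X : Type*} [AddCommGroup X] [Module ℝ X]
    [MetricSpace X] [IsTopologicalAddGroup X] [ContinuousSMul ℝ X] [CompleteSpace X]
    (hinv : ∀ x y z : X, dist (x + z) (y + z) = dist x y)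
    (hnd : ∀ (α : ℝ) (x : X), 0 ≤ α → α ≤ 1 → dist (α • x) 0 ≤ dist x 0)
    (A : ℕ → Set X) (hchain : ∀ n, A n ⊆ A (n + 1))
    (K : ℕ → ℕ) (hK : ∀ n, n ≤ K n) (hA1 : ∀ n, A n + A n ⊆ A (K n))
    (hA2 : ∀ (n : ℕ) (c : ℝ), c • A n ⊆ A n)
    (hA3 : Dense (⋃ n, A n))
    (N₀ : Set ℕ) (hN₀ : N₀.Infinite) (x : ℕ → X)
    (hbdd : ∀ r : ℝ, 0 < r → ∃ l : ℝ, 0 < l ∧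
      ∀ n ∈ N₀, x n ∈ l • closedBall (0 : X) r)
    (c : ℝ) (hc : 0 < c) (hfar : ∀ n ∈ N₀, c ≤ infDist (x n) (A n)) :
    ∀ ε : ℕ → ℝ, (∀ n, 0 ≤ ε n) → Antitone ε → Tendsto ε atTop (nhds 0) →
      ∃ y : X, ¬ ∃ C : ℝ, ∀ n, infDist y (A n) ≤ C * ε n := by
  intro ε hε _ εlim
  by_contra h
  push_neg at h
  -- translation invariance in convenient form
  have hd0 : ∀ u v : X, dist u v = dist (u - v) 0 := by
    intro u v
    have := hinv (u - v) 0 v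
    simpa using this
  -- monotonicity of the scheme
  have hmono : Monotone A := monotone_nat_of_le_succ hchain
  -- iterates of K grow
  have hKiter : ∀ (m n : ℕ), n ≤ K^[m] n := by
    intro m
    induction m with
    | zero => intro n; simp
    | succ m ih =>
      intro n
      have h1 := ih n
      have h2 := hK (K^[m] n)
      rw [Function.iterate_succ_apply']
      omega
  -- Baire category argument
  set F : ℕ → Set X := fun M => {y | ∀ n, infDist y (A n) ≤ (M : ℝ) * ε n} with hF
  have hFclosed : ∀ M : ℕ, IsClosed (F M) := by
    intro M
    have : F M = ⋂ n, {y : X | infDist y (A n) ≤ (M : ℝ) * ε n} := by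
      ext y; simp [hF, Set.mem_iInter]
    rw [this]
    exact isClosed_iInter fun n =>
      isClosed_le (continuous_infDist_pt (A n)) continuous_const
  have hFcover : (⋃ M : ℕ, F M) = Set.univ := by
    apply Set.eq_univ_iff_forall.mpr
    intro y
    obtain ⟨C, hC⟩ := h y
    refine Set.mem_iUnion.mpr ⟨⌈C⌉₊, fun n => ?_⟩
    calc infDist y (A n) ≤ C * ε n := hC n
      _ ≤ (⌈C⌉₊ : ℝ) * ε n := mul_le_mul_of_nonneg_right (Nat.le_ceil C) (hε n)
  obtain ⟨M, y0, hy0⟩ := nonempty_interior_of_iUnion_of_closed hFclosed hFcover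
  rw [mem_interior_iff_mem_nhds, Metric.mem_nhds_iff] at hy0
  obtain ⟨r, hr, hball⟩ := hy0
  have hy0F : y0 ∈ F M := hball (mem_ball_self hr)
  -- some A n is nonempty
  obtain ⟨n1, hn1⟩ := hN₀.nonempty
  have hAn1 : (A n1).Nonempty := by
    by_contra hemp
    rw [Set.not_nonempty_iff_eq_empty] at hemp
    have hcle := hfar n1 hn1
    rw [hemp, Metric.infDist_empty] at hcle
    linarith
  have hAne : ∀ n, n1 ≤ n → (A n).Nonempty := fun n hn => hAn1.mono (hmono hn)
  -- uniform estimate on the small ball around 0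
  have step2 : ∀ z : X, dist z 0 ≤ r / 2 → ∀ n, n1 ≤ n → ∀ δ : ℝ, 0 < δ →
      ∃ p ∈ A (K n), dist z p < 2 * (M : ℝ) * ε n + 2 * δ := by
    intro z hz n hn δ hδ
    have hzball : y0 + z ∈ ball y0 r := by
      rw [mem_ball]
      have e : dist (y0 + z) y0 = dist z 0 := by
        have := hinv z 0 y0
        rw [add_comm y0 z]
        simpa using this
      rw [e]; linarith
    have h1 : infDist (y0 + z) (A n) ≤ (M : ℝ) * ε n := hball hzball n
    have h2 : infDist y0 (A n) ≤ (M : ℝ) * ε n := hy0F n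
    have hne := hAne n hn
    obtain ⟨a, ha, hda⟩ := (Metric.infDist_lt_iff hne).mp
      (show infDist (y0 + z) (A n) < (M : ℝ) * ε n + δ by linarith)
    obtain ⟨b, hb, hdb⟩ := (Metric.infDist_lt_iff hne).mp
      (show infDist y0 (A n) < (M : ℝ) * ε n + δ by linarith)
    refine ⟨a + (-1 : ℝ) • b, hA1 n (Set.add_mem_add ha
      (hA2 n (-1) (Set.smul_mem_smul_set hb))), ?_⟩
    have hab : a + (-1 : ℝ) • b = a - b := by
      rw [neg_one_smul]; abel
    rw [hab]
    have e1 : dist z (a - y0) = dist (y0 + z) a := by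
      rw [hd0 z (a - y0), hd0 (y0 + z) a]
      congr 1
      abel
    have e2 : dist (a - y0) (a - b) = dist b y0 := by
      rw [hd0 (a - y0) (a - b), hd0 b y0]
      congr 1
      abel
    have e3 : dist b y0 = dist y0 b := dist_comm b y0
    calc dist z (a - b) ≤ dist z (a - y0) + dist (a - y0) (a - b) := dist_triangle _ _ _
      _ = dist (y0 + z) a + dist y0 b := by rw [e1, e2, e3]
      _ < ((M : ℝ) * ε n + δ) + ((M : ℝ) * ε n + δ) := by linarith
      _ = 2 * (M : ℝ) * ε n + 2 * δ := by ring
  -- scaling lemma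
  have scale : ∀ (m : ℕ) (z : X) (n : ℕ) (a : X), a ∈ A n →
      ∃ b ∈ A (K^[m] n), dist ((m : ℝ) • z) b ≤ (m : ℝ) * dist z a := by
    intro m
    induction m with
    | zero =>
      intro z n a ha
      refine ⟨(0 : ℝ) • a, hA2 n 0 (Set.smul_mem_smul_set ha), ?_⟩
      simp
    | succ m ih =>
      intro z n a ha
      obtain ⟨b, hb, hdb⟩ := ih z n a ha
      refine ⟨b + a, ?_, ?_⟩
      · rw [Function.iterate_succ_apply']
        exact hA1 (K^[m] n) (Set.add_mem_add hb (hmono (hKiter m n) ha))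
      · have hsmul : ((m + 1 : ℕ) : ℝ) • z = (m : ℝ) • z + z := by
          push_cast
          rw [add_smul, one_smul]
        rw [hsmul]
        have t1 : dist ((m : ℝ) • z + z) (b + z) = dist ((m : ℝ) • z) b := hinv _ _ _
        have t2 : dist (b + z) (b + a) = dist z a := by
          rw [add_comm b z, add_comm b a]; exact hinv _ _ _
        calc dist ((m : ℝ) • z + z) (b + a)
            ≤ dist ((m : ℝ) • z + z) (b + z) + dist (b + z) (b + a) := dist_triangle _ _ _
          _ = dist ((m : ℝ) • z) b + dist z a := by rw [t1, t2]
          _ ≤ (m : ℝ) * dist z a + dist z a := by linarith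
          _ = ((m + 1 : ℕ) : ℝ) * dist z a := by push_cast; ring
  -- the bounded family
  obtain ⟨l, hl, hxl⟩ := hbdd (r / 2) (by linarith)
  set m : ℕ := ⌈l⌉₊ with hm
  have hm1 : 1 ≤ m := Nat.one_le_iff_ne_zero.mpr (by
    intro h0
    have : l ≤ 0 := by
      have := Nat.ceil_eq_zero.mp h0
      linarith
    linarith)
  have hmpos : (0 : ℝ) < (m : ℝ) := by exact_mod_cast hm1
  have hlm : l ≤ (m : ℝ) := Nat.le_ceil l
  -- choose threshold
  set d : ℝ := c / (8 * (m : ℝ) * ((M : ℝ) + 1)) with hd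
  have hdpos : 0 < d := by
    apply div_pos hc
    positivity
  obtain ⟨n2, hn2small, hn2ge⟩ :=
    ((εlim.eventually (gt_mem_nhds hdpos)).and (eventually_ge_atTop n1)).exists
  -- an index in N₀ beyond the iterated scheme index
  set N1 : ℕ := K^[m] (K n2) with hN1
  obtain ⟨n', hn'N₀, hn'gt⟩ : ∃ n' ∈ N₀, N1 ≤ n' := by
    by_contra hcon
    push_neg at hcon
    exact hN₀ ((Set.finite_Iio N1).subset fun b hb => hcon b hb)
  obtain ⟨z, hz, hxz⟩ := hxl n' hn'N₀
  have hzball : dist z 0 ≤ r / 2 := by simpa using hz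
  set w : X := (l / (m : ℝ)) • z with hw
  have hwball : dist w 0 ≤ r / 2 := by
    have := hnd (l / (m : ℝ)) z (div_nonneg hl.le hmpos.le)
      ((div_le_one hmpos).mpr hlm)
    calc dist w 0 ≤ dist z 0 := this
      _ ≤ r / 2 := hzball
  obtain ⟨p, hp, hdp⟩ := step2 w hwball n2 hn2ge d hdpos
  obtain ⟨b, hb, hdbw⟩ := scale m w (K n2) p hp
  have hmw : (m : ℝ) • w = x n' := by
    rw [hw, smul_smul, mul_div_cancel₀ l (ne_of_gt hmpos)]
    exact hxz
  have hbmem : b ∈ A n' := hmono hn'gt hb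
  have hfinal : infDist (x n') (A n') ≤ (m : ℝ) * dist w p := by
    rw [← hmw]
    exact le_trans (infDist_le_dist_of_mem hbmem) hdbw
  have hquarter : 2 * (m : ℝ) * ((M : ℝ) + 1) * d = c / 4 := by
    rw [hd]; field_simp; ring
  have hlt : (m : ℝ) * (2 * (M : ℝ) * ε n2 + 2 * d) < c := by
    have h2 : ε n2 < d := hn2small
    have h3 : 0 ≤ ε n2 := hε n2
    have hMnn : (0 : ℝ) ≤ (M : ℝ) := Nat.cast_nonneg M
    nlinarith [mul_nonneg hmpos.le hMnn, mul_pos hmpos hdpos,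
      mul_nonneg (mul_nonneg hmpos.le hMnn) (sub_nonneg.mpr h2.le)]
  have hlast : (m : ℝ) * dist w p < c :=
    lt_of_lt_of_le (mul_lt_mul_of_pos_left hdp hmpos) hlt.le
  exact absurd (hfar n' hn'N₀) (not_le.mpr (lt_of_le_of_lt hfinal hlast))
end

section
/- Let s (the space of all real sequences with the Fréchet metric d({a_k},{b_k}) = Σ_k 2^{-k}|a_k - b_k|/(1+|a_k - b_k|)) and let {A_n} be any approximation scheme on s. Then {A_n} fails Shapiro's theorem uniformly: there exists a sequence δ_n ↘ 0 such that E(x,A_n) ≤ δ_n for all x ∈ s and all n. -/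
open Filter Pointwise

noncomputable def Dseq (x a : ℕ → ℝ) : ℝ :=
  ∑' k : ℕ, (2 : ℝ)⁻¹ ^ k * (|x k - a k| / (1 + |x k - a k|))

lemma Dterm_nonneg (x a : ℕ → ℝ) (k : ℕ) :
    0 ≤ (2 : ℝ)⁻¹ ^ k * (|x k - a k| / (1 + |x k - a k|)) := by positivity

lemma Dterm_le (x a : ℕ → ℝ) (k : ℕ) :
    (2 : ℝ)⁻¹ ^ k * (|x k - a k| / (1 + |x k - a k|)) ≤ (2:ℝ)⁻¹ ^ k := by
  have h1 : (0:ℝ) < 1 + |x k - a k| := by positivity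
  have h2 : |x k - a k| / (1 + |x k - a k|) ≤ 1 := by
    rw [div_le_one h1]; linarith [abs_nonneg (x k - a k)]
  calc (2:ℝ)⁻¹ ^ k * (|x k - a k| / (1 + |x k - a k|)) ≤ (2:ℝ)⁻¹ ^ k * 1 := by
        apply mul_le_mul_of_nonneg_left h2 (by positivity)
    _ = (2:ℝ)⁻¹ ^ k := mul_one _

lemma Dsummable (x a : ℕ → ℝ) :
    Summable (fun k => (2 : ℝ)⁻¹ ^ k * (|x k - a k| / (1 + |x k - a k|))) :=
  Summable.of_nonneg_of_le (Dterm_nonneg x a) (Dterm_le x a)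
    (summable_geometric_of_lt_one (by norm_num) (by norm_num))

lemma Dseq_nonneg (x a : ℕ → ℝ) : 0 ≤ Dseq x a :=
  tsum_nonneg (Dterm_nonneg x a)

lemma Dseq_le_two (x a : ℕ → ℝ) : Dseq x a ≤ 2 := by
  have := Summable.tsum_le_tsum (Dterm_le x a) (Dsummable x a)
    (summable_geometric_of_lt_one (by norm_num) (by norm_num))
  rw [tsum_geometric_of_lt_one (by norm_num) (by norm_num)] at this
  rw [Dseq]
  exact this.trans_eq (by norm_num)

lemma Dseq_coord (x a : ℕ → ℝ) (k : ℕ) (ε : ℝ) (hε : 0 < ε)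
    (h : Dseq x a < (2:ℝ)⁻¹ ^ k * (ε / (1 + ε))) : |x k - a k| < ε := by
  have hle := Summable.le_tsum (Dsummable x a) k (fun j _ => Dterm_nonneg x a j)
  have h2 : (2:ℝ)⁻¹ ^ k * (|x k - a k| / (1 + |x k - a k|)) < (2:ℝ)⁻¹ ^ k * (ε / (1 + ε)) :=
    lt_of_le_of_lt hle h
  have hp : (0:ℝ) < (2:ℝ)⁻¹ ^ k := by positivity
  have h3 : |x k - a k| / (1 + |x k - a k|) < ε / (1 + ε) :=
    lt_of_mul_lt_mul_left h2 hp.le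
  have ht : (0:ℝ) < 1 + |x k - a k| := by positivity
  have htε : (0:ℝ) < 1 + ε := by positivity
  rw [div_lt_div_iff₀ ht htε] at h3
  nlinarith [abs_nonneg (x k - a k)]

lemma Dseq_small (x a : ℕ → ℝ) (N : ℕ) (h : ∀ k < N, x k = a k) :
    Dseq x a ≤ 2 * (2:ℝ)⁻¹ ^ N := by
  have hsum := Dsummable x a
  have key := Summable.sum_add_tsum_nat_add (f := fun k => (2 : ℝ)⁻¹ ^ k * (|x k - a k| / (1 + |x k - a k|))) N hsum
  have hz : ∑ i ∈ Finset.range N, (2 : ℝ)⁻¹ ^ i * (|x i - a i| / (1 + |x i - a i|)) = 0 := by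
    apply Finset.sum_eq_zero
    intro i hi
    rw [h i (Finset.mem_range.mp hi)]
    simp
  have hshift : ∑' (i : ℕ), (2 : ℝ)⁻¹ ^ (i + N) * (|x (i+N) - a (i+N)| / (1 + |x (i+N) - a (i+N)|))
      ≤ ∑' (i : ℕ), (2:ℝ)⁻¹ ^ (i + N) := by
    apply Summable.tsum_le_tsum (fun i => Dterm_le x a (i + N))
    · exact (summable_nat_add_iff N).mpr hsum
    · exact (summable_nat_add_iff N).mpr (summable_geometric_of_lt_one (by norm_num) (by norm_num))
  have hgeo : ∑' (i : ℕ), (2:ℝ)⁻¹ ^ (i + N) = 2 * (2:ℝ)⁻¹ ^ N := by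
    simp_rw [pow_add]
    rw [tsum_mul_right, tsum_geometric_of_lt_one (by norm_num) (by norm_num)]
    ring_nf
  calc Dseq x a = ∑' (i : ℕ), (2 : ℝ)⁻¹ ^ (i + N) * (|x (i+N) - a (i+N)| / (1 + |x (i+N) - a (i+N)|)) := by
        rw [Dseq, ← key, hz, zero_add]
    _ ≤ 2 * (2:ℝ)⁻¹ ^ N := hshift.trans_eq hgeo

lemma sum_mem_scheme {ι : Type} (A : ℕ → Set (ℕ → ℝ)) (Amono : Monotone A)
    (K : ℕ → ℕ) (hA1 : ∀ n, A n + A n ⊆ A (K n)) (m : ℕ) (h0 : (0 : ℕ → ℝ) ∈ A m)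
    (F : Finset ι) :
    ∃ p, ∀ f : ι → ℕ → ℝ, (∀ i ∈ F, f i ∈ A m) → ∑ i ∈ F, f i ∈ A p := by
  classical
  induction F using Finset.induction_on with
  | empty => exact ⟨m, fun f _ => by simpa using h0⟩
  | insert i F hi ih =>
    obtain ⟨p, hp⟩ := ih
    refine ⟨K (max m p), fun f hf => ?_⟩
    rw [Finset.sum_insert hi]
    apply hA1 (max m p)
    exact Set.add_mem_add
      (Amono (le_max_left m p) (hf i (Finset.mem_insert_self i F)))
      (Amono (le_max_right m p) (hp f (fun j hj => hf j (Finset.mem_insert_of_mem hj))))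

lemma exists_level (A : ℕ → Set (ℕ → ℝ)) (Amono : Monotone A)
    (K : ℕ → ℕ) (hA1 : ∀ n, A n + A n ⊆ A (K n))
    (hA2 : ∀ (n : ℕ) (c : ℝ), c • A n ⊆ A n)
    (hA3 : ∀ (x : ℕ → ℝ) (δ : ℝ), 0 < δ → ∃ n, ∃ a ∈ A n, Dseq x a < δ)
    (n₀ : ℕ) (h0 : (0 : ℕ → ℝ) ∈ A n₀) (N : ℕ) :
    ∃ M, ∀ x : ℕ → ℝ, ∃ a ∈ A M, ∀ k < N, a k = x k := by
  classical
  set π : (ℕ → ℝ) →ₗ[ℝ] (Fin N → ℝ) :=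
    LinearMap.pi (fun i : Fin N => LinearMap.proj (i : ℕ)) with hπ
  have hπapp : ∀ (y : ℕ → ℝ) (i : Fin N), π y i = y i := fun y i => rfl
  set V : ℕ → Submodule ℝ (Fin N → ℝ) := fun n => Submodule.span ℝ (π '' A n) with hV
  have Vmono : Monotone V := fun a b hab =>
    Submodule.span_mono (Set.image_mono (Amono hab))
  -- the union of the V n is dense, hence the sup is everything
  have hVtop : (⨆ n, V n) = ⊤ := by
    rw [eq_top_iff]
    intro v _
    set W := ⨆ n, V n with hW
    have hclosed : IsClosed (W : Set (Fin N → ℝ)) := Submodule.closed_of_finiteDimensional W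
    have hmem : v ∈ closure (W : Set (Fin N → ℝ)) := by
      rw [Metric.mem_closure_iff]
      intro ε hε
      set x : ℕ → ℝ := fun k => if h : k < N then v ⟨k, h⟩ else 0 with hx
      obtain ⟨n, a, ha, hda⟩ := hA3 x ((2:ℝ)⁻¹ ^ N * (ε / (1 + ε))) (by positivity)
      refine ⟨π a, ?_, ?_⟩
      · exact le_iSup V n (Submodule.subset_span ⟨a, ha, rfl⟩)
      · rw [dist_pi_lt_iff hε]
        intro i
        have hiN : (i : ℕ) < N := i.2
        have hcoord : |x i - a i| < ε := by
          apply Dseq_coord x a i ε hε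
          apply hda.trans_le
          have : (2:ℝ)⁻¹ ^ N ≤ (2:ℝ)⁻¹ ^ (i:ℕ) :=
            pow_le_pow_of_le_one (by norm_num) (by norm_num) hiN.le
          have hεp : (0:ℝ) < ε / (1 + ε) := by positivity
          nlinarith
        have hxv : x i = v i := by simp [hx, hiN]
        rw [hπapp, Real.dist_eq, ← hxv]
        exact hcoord
    rwa [hclosed.closure_eq] at hmem
  -- stabilization
  obtain ⟨n₁, hn₁⟩ := (monotone_stabilizes_iff_noetherian.mpr inferInstance) ⟨V, Vmono⟩
  set m := max n₁ n₀ with hm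
  have hVm : V m = ⊤ := by
    have h1 : V n₁ = V m := hn₁ m (le_max_left _ _)
    rw [← h1]
    apply le_antisymm le_top
    rw [← hVtop]
    apply iSup_le
    intro k
    rcases le_total k n₁ with h | h
    · exact Vmono h
    · exact (hn₁ k h).ge
  have h0m : (0 : ℕ → ℝ) ∈ A m := Amono (le_max_right n₁ n₀) h0
  -- for each standard basis vector find a finite spanning subset
  have hsingle : ∀ i : Fin N, ∃ T : Finset (Fin N → ℝ),
      ↑T ⊆ π '' A m ∧ (Pi.single i 1 : Fin N → ℝ) ∈ Submodule.span ℝ (T : Set (Fin N → ℝ)) := by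
    intro i
    have : (Pi.single i 1 : Fin N → ℝ) ∈ V m := hVm ▸ Submodule.mem_top
    exact Submodule.mem_span_finite_of_mem_span this
  choose T hT1 hT2 using hsingle
  set F : Finset (Fin N → ℝ) := Finset.univ.biUnion T with hF
  have hFsub : (F : Set (Fin N → ℝ)) ⊆ π '' A m := by
    intro w hw
    simp only [hF, Finset.coe_biUnion, Set.mem_iUnion] at hw
    obtain ⟨i, _, hi⟩ := hw
    exact hT1 i hi
  have hFspan : ∀ v : Fin N → ℝ, v ∈ Submodule.span ℝ (F : Set (Fin N → ℝ)) := by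
    intro v
    have hv : v = ∑ i : Fin N, (v i) • (Pi.single i 1 : Fin N → ℝ) := by
      rw [← Finset.univ_sum_single v]
      apply Finset.sum_congr rfl
      intro i _
      rw [Finset.univ_sum_single v]
      ext j
      rcases eq_or_ne i j with rfl | hij
      · simp
      · simp [Pi.single_eq_of_ne' hij.symm, Pi.single_eq_of_ne hij.symm]
    rw [hv]
    apply Submodule.sum_mem
    intro i _
    apply Submodule.smul_mem
    apply Submodule.span_mono (show (T i : Set (Fin N → ℝ)) ⊆ F by
      exact_mod_cast Finset.coe_subset.mpr (Finset.subset_biUnion_of_mem T (Finset.mem_univ i)))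
    exact hT2 i
  -- choose preimages
  have hpre : ∀ w : {v : Fin N → ℝ // v ∈ F}, ∃ b, b ∈ A m ∧ π b = (w : Fin N → ℝ) := by
    intro w
    obtain ⟨b, hb, hbw⟩ := hFsub w.2
    exact ⟨b, hb, hbw⟩
  choose g hg1 hg2 using hpre
  obtain ⟨p, hp⟩ := sum_mem_scheme A Amono K hA1 m h0m F.attach
  refine ⟨p, fun x => ?_⟩
  obtain ⟨c, -, hc⟩ := Submodule.mem_span_finset.mp (hFspan (π x))
  set a : ℕ → ℝ := ∑ w ∈ F.attach, (c w.1) • g w with ha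
  have haA : a ∈ A p := by
    apply hp
    intro w _
    exact hA2 m (c w.1) (Set.smul_mem_smul_set (hg1 w))
  refine ⟨a, haA, ?_⟩
  have hπa : π a = π x := by
    rw [ha, map_sum, ← hc]
    rw [← Finset.sum_attach F (fun w => c w • w)]
    apply Finset.sum_congr rfl
    intro w _
    rw [map_smul, hg2]
  intro k hk
  have := congrFun hπa ⟨k, hk⟩
  rwa [hπapp, hπapp] at this

/-- On the space `s = ℕ → ℝ` of all real sequences with the Fréchet
metric `d(a,b) = Σ_k 2^{-k} |a_k - b_k|/(1 + |a_k - b_k|)`, every approximation scheme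
fails Shapiro's theorem uniformly on all of `s`. -/
theorem all_schemes_fail_shapiro_on_sequence_space
    (d : (ℕ → ℝ) → (ℕ → ℝ) → ℝ)
    (hd : ∀ a b : ℕ → ℝ,
      d a b = ∑' k : ℕ, (2 : ℝ)⁻¹ ^ k * (|a k - b k| / (1 + |a k - b k|)))
    (A : ℕ → Set (ℕ → ℝ)) (hchain : ∀ n, A n ⊆ A (n + 1))
    (K : ℕ → ℕ) (hK : ∀ n, n ≤ K n) (hA1 : ∀ n, A n + A n ⊆ A (K n))
    (hA2 : ∀ (n : ℕ) (c : ℝ), c • A n ⊆ A n)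
    (hA3 : ∀ (x : ℕ → ℝ) (δ : ℝ), 0 < δ → ∃ n, ∃ a ∈ A n, d x a < δ) :
    ∃ δ : ℕ → ℝ, (∀ n, 0 ≤ δ n) ∧ Antitone δ ∧ Tendsto δ atTop (nhds 0) ∧
      ∀ (x : ℕ → ℝ) (n : ℕ), (⨅ a : A n, d x a) ≤ δ n := by
  classical
  have hdD : d = Dseq := by funext a b; rw [hd]; rfl
  subst hdD
  have Amono : Monotone A := monotone_nat_of_le_succ hchain
  obtain ⟨n₀, a₀, ha₀, -⟩ := hA3 0 1 one_pos
  have h0 : (0 : ℕ → ℝ) ∈ A n₀ := by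
    have := hA2 n₀ 0 (Set.smul_mem_smul_set (a := (0:ℝ)) ha₀)
    rwa [zero_smul] at this
  have core : ∀ N : ℕ, ∃ M, ∀ x : ℕ → ℝ, ∃ a ∈ A M, Dseq x a ≤ 2 * (2:ℝ)⁻¹ ^ N := by
    intro N
    obtain ⟨M, hM⟩ := exists_level A Amono K hA1 hA2 hA3 n₀ h0 N
    refine ⟨M, fun x => ?_⟩
    obtain ⟨a, haM, hak⟩ := hM x
    exact ⟨a, haM, Dseq_small x a N (fun k hk => (hak k hk).symm)⟩
  choose M₀ hM₀ using core
  set M : ℕ → ℕ := fun N => N + (Finset.range (N + 1)).sum M₀ with hMdef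
  have hM₀le : ∀ N, M₀ N ≤ M N := by
    intro N
    have : M₀ N ≤ (Finset.range (N + 1)).sum M₀ :=
      Finset.single_le_sum (fun i _ => Nat.zero_le _) (Finset.self_mem_range_succ N)
    simp only [hMdef]
    omega
  have hNle : ∀ N, N ≤ M N := fun N => Nat.le_add_right _ _
  have hMmono : Monotone M := by
    intro a b hab
    have : (Finset.range (a + 1)).sum M₀ ≤ (Finset.range (b + 1)).sum M₀ :=
      Finset.sum_le_sum_of_subset (Finset.range_subset_range.mpr (by omega))
    simp only [hMdef]
    omega
  set h : ℕ → ℕ := fun n => Nat.findGreatest (fun N => M N ≤ n) n with hh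
  have hgood : ∀ n x, 0 < h n → ∃ a ∈ A n, Dseq x a ≤ 2 * (2:ℝ)⁻¹ ^ (h n) := by
    intro n x hpos
    have hspec : M (h n) ≤ n := (Nat.findGreatest_eq_iff.mp rfl).2.1 (Nat.pos_iff_ne_zero.mp hpos)
    obtain ⟨a, haM, hda⟩ := hM₀ (h n) x
    exact ⟨a, Amono ((hM₀le (h n)).trans hspec) haM, hda⟩
  refine ⟨fun n => 2 * (2:ℝ)⁻¹ ^ (h n), fun n => by positivity, ?_, ?_, ?_⟩
  · -- Antitone
    intro n n' hnn'
    have hmono : h n ≤ h n' := by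
      rcases Nat.eq_zero_or_pos (h n) with h0' | hpos
      · omega
      · have hspec : M (h n) ≤ n := (Nat.findGreatest_eq_iff.mp rfl).2.1 (Nat.pos_iff_ne_zero.mp hpos)
        exact Nat.le_findGreatest ((Nat.findGreatest_le n).trans hnn') (hspec.trans hnn')
    have := pow_le_pow_of_le_one (by norm_num : (0:ℝ) ≤ 2⁻¹) (by norm_num) hmono
    linarith
  · -- Tendsto 0
    have hhtop : Tendsto h atTop atTop := by
      rw [tendsto_atTop]
      intro b
      rw [eventually_atTop]
      refine ⟨M b, fun n hn => ?_⟩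
      exact Nat.le_findGreatest ((hNle b).trans hn) hn
    have := (tendsto_pow_atTop_nhds_zero_of_lt_one
      (by norm_num : (0:ℝ) ≤ 2⁻¹) (by norm_num)).comp hhtop
    simpa using this.const_mul 2
  · -- bound
    intro x n
    have hbdd : BddBelow (Set.range fun a : A n => Dseq x a) := by
      refine ⟨0, ?_⟩
      rintro y ⟨i, rfl⟩
      exact Dseq_nonneg x i
    rcases Nat.eq_zero_or_pos (h n) with h0' | hpos
    · simp only [hh] at h0' ⊢
      rw [h0', pow_zero, mul_one]
      cases isEmpty_or_nonempty (A n) with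
      | inl he => rw [Real.iInf_of_isEmpty]; norm_num
      | inr hne =>
        obtain ⟨a, ha⟩ := hne
        exact ciInf_le_of_le hbdd ⟨a, ha⟩ (Dseq_le_two x a)
    · obtain ⟨a, ha, hda⟩ := hgood n x hpos
      exact ciInf_le_of_le hbdd ⟨a, ha⟩ hda
end

section
/- Let (X,d) be an F-space with non-decreasing translation-invariant metric and let ℰ(x) = {e_n(x)} be a scale on X. Then the following are equivalent: (i) there exists ε_n ↘ 0 such that for every x ∈ X, e_n(x) = O(ε_n); (ii) there exist ε_n ↘ 0, C > 0, and r_0 > 0 such that e_n(x) ≤ Cε_n for all x ∈ B(0,r_0) and all n. -/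
open Filter Metric

/-- For a scale `ℰ(x) = {e_n(x)}` on an F-space with non-decreasing
translation-invariant metric, the scale is dominated pointwise by a null sequence (up to
constants depending on the point) iff it is uniformly dominated on some ball `B(0,r₀)`. -/
theorem scale_pointwise_iff_uniform_domination {X : Type*} [AddCommGroup X] [Module ℝ X]
    [MetricSpace X] [IsTopologicalAddGroup X] [ContinuousSMul ℝ X] [CompleteSpace X]
    (hinv : ∀ x y z : X, dist (x + z) (y + z) = dist x y)
    (hnd : ∀ (α : ℝ) (x : X), 0 ≤ α → α ≤ 1 → dist (α • x) 0 ≤ dist x 0)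
    (e : ℕ → X → ℝ) (C₁ C₂ : ℝ) (hC₁ : 0 < C₁) (hC₂ : 0 < C₂)
    (K : ℕ → ℕ) (hKmono : StrictMono K) (φ : ℝ → ℝ)
    (hnonneg : ∀ n x, 0 ≤ e n x)
    (hbound : ∀ n x, e n x ≤ C₁ * dist x 0)
    (hanti : ∀ n x, e (n + 1) x ≤ e n x)
    (hcont : ∀ n, Continuous (e n))
    (hadd : ∀ n (x y : X), e (K n) (x + y) ≤ C₂ * (e n x + e n y))
    (hsmul : ∀ n (l : ℝ) (x : X), e n (l • x) ≤ φ |l| * e n x)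
    (hsymm : ∀ n (x : X), e n (-x) = e n x) :
    (∃ ε : ℕ → ℝ, (∀ n, 0 ≤ ε n) ∧ Antitone ε ∧ Tendsto ε atTop (nhds 0) ∧
        ∀ x : X, ∃ C : ℝ, ∀ n, e n x ≤ C * ε n) ↔
      (∃ (ε : ℕ → ℝ) (C r₀ : ℝ), (∀ n, 0 ≤ ε n) ∧ Antitone ε ∧
        Tendsto ε atTop (nhds 0) ∧ 0 < C ∧ 0 < r₀ ∧
        ∀ x ∈ closedBall (0 : X) r₀, ∀ n, e n x ≤ C * ε n) := by
  have eanti : ∀ x : X, Antitone fun n => e n x := fun x =>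
    antitone_nat_of_succ_le fun n => hanti n x
  constructor
  · rintro ⟨ε, hε0, hεanti, hεlim, hdom⟩
    -- replace ε by a strictly positive sequence η
    set η : ℕ → ℝ := fun n => ε n + (1 / 2) ^ n with hηdef
    have hη0 : ∀ n, 0 < η n := fun n =>
      add_pos_of_nonneg_of_pos (hε0 n) (by positivity)
    have hηanti : Antitone η := by
      refine hεanti.add (antitone_nat_of_succ_le fun n => ?_)
      rw [pow_succ]
      nlinarith [pow_pos (by norm_num : (0:ℝ) < 1/2) n]
    have hηlim : Tendsto η atTop (nhds 0) := by
      have h2 : Tendsto (fun n : ℕ => ((1:ℝ) / 2) ^ n) atTop (nhds 0) :=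
        tendsto_pow_atTop_nhds_zero_of_lt_one (by norm_num) (by norm_num)
      simpa [hηdef] using hεlim.add h2
    -- Baire category argument
    have hclosed : ∀ m : ℕ, IsClosed {x : X | ∀ n, e n x ≤ (m : ℝ) * η n} := by
      intro m
      have : {x : X | ∀ n, e n x ≤ (m : ℝ) * η n} =
          ⋂ n, (e n) ⁻¹' Set.Iic ((m : ℝ) * η n) := by
        ext x; simp [Set.mem_iInter]
      rw [this]
      exact isClosed_iInter fun n => (isClosed_Iic).preimage (hcont n)
    have hcover : (⋃ m : ℕ, {x : X | ∀ n, e n x ≤ (m : ℝ) * η n}) = Set.univ := by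
      ext x
      simp only [Set.mem_iUnion, Set.mem_setOf_eq, Set.mem_univ, iff_true]
      obtain ⟨C, hC⟩ := hdom x
      refine ⟨⌈C⌉₊, fun n => ?_⟩
      have h1 : e n x ≤ C * ε n := hC n
      have h2 : C * ε n ≤ (⌈C⌉₊ : ℝ) * η n := by
        rcases le_or_gt C 0 with h | h
        · have : C * ε n ≤ 0 := mul_nonpos_of_nonpos_of_nonneg h (hε0 n)
          have : (0:ℝ) ≤ (⌈C⌉₊ : ℝ) * η n :=
            mul_nonneg (Nat.cast_nonneg _) (hη0 n).le
          linarith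
        · have hCle : C ≤ (⌈C⌉₊ : ℝ) := Nat.le_ceil C
          have hεη : ε n ≤ η n := by
            have : (0:ℝ) < (1/2) ^ n := by positivity
            simp only [hηdef]; linarith
          calc C * ε n ≤ C * η n := by nlinarith
            _ ≤ (⌈C⌉₊ : ℝ) * η n := by nlinarith [hη0 n]
      linarith
    obtain ⟨m, x₀, hx₀⟩ :=
      nonempty_interior_of_iUnion_of_closed hclosed hcover
    rw [mem_interior_iff_mem_nhds, Metric.mem_nhds_iff] at hx₀
    obtain ⟨r, hr, hball⟩ := hx₀
    -- inverse of K
    classical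
    set j : ℕ → ℕ := fun n => Nat.findGreatest (fun i => K i ≤ n) n with hjdef
    have hjmono : Monotone j := by
      intro a b hab
      exact le_trans (Nat.findGreatest_mono_right _ hab)
        (Nat.findGreatest_mono_left (fun i hi => le_trans hi hab) b)
    have hjtop : Tendsto j atTop atTop := by
      refine tendsto_atTop_atTop.2 fun b => ⟨K b, fun n hn => ?_⟩
      exact Nat.le_findGreatest (le_trans hKmono.le_apply hn) hn
    set ε' : ℕ → ℝ := fun n => η (j n) with hε'def
    have key : ∀ y ∈ closedBall (0 : X) (r / 2), ∀ n : ℕ,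
        e (K n) y ≤ 2 * C₂ * (m : ℝ) * η n := by
      intro y hy n
      have hx₀mem : x₀ ∈ {x : X | ∀ n, e n x ≤ (m : ℝ) * η n} :=
        hball (mem_ball_self hr)
      have hy' : x₀ + y ∈ {x : X | ∀ n, e n x ≤ (m : ℝ) * η n} := by
        apply hball
        rw [Metric.mem_ball]
        have : dist (x₀ + y) x₀ = dist y 0 := by
          have := hinv y 0 x₀
          simpa [add_comm] using this
        rw [this]
        have := Metric.mem_closedBall.mp hy
        rw [dist_comm] at this ⊢
        calc dist 0 y ≤ r / 2 := by rwa [dist_comm]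
          _ < r := by linarith
      have heq : y = (x₀ + y) + (-x₀) := by abel
      calc e (K n) y = e (K n) ((x₀ + y) + (-x₀)) := by rw [← heq]
        _ ≤ C₂ * (e n (x₀ + y) + e n (-x₀)) := hadd n _ _
        _ = C₂ * (e n (x₀ + y) + e n x₀) := by rw [hsymm]
        _ ≤ C₂ * ((m : ℝ) * η n + (m : ℝ) * η n) := by
            have h1 := hy' n
            have h2 := hx₀mem n
            nlinarith
        _ = 2 * C₂ * (m : ℝ) * η n := by ring
    set C' : ℝ := 2 * C₂ * (m : ℝ) + C₁ * r / η 0 + 1 with hC'def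
    have hC'pos : 0 < C' := by
      have h1 : (0:ℝ) ≤ 2 * C₂ * m := by positivity
      have h2 : (0:ℝ) ≤ C₁ * r / η 0 := by
        apply div_nonneg _ (hη0 0).le
        positivity
      simp only [hC'def]; linarith
    refine ⟨ε', C', r / 2, fun n => (hη0 (j n)).le, hηanti.comp_monotone hjmono,
      hηlim.comp hjtop, hC'pos, by linarith, ?_⟩
    intro y hy n
    by_cases hn : K 0 ≤ n
    · have hKjn : K (j n) ≤ n :=
        Nat.findGreatest_spec (P := fun i => K i ≤ n) (m := 0) (Nat.zero_le n) hn
      have h1 : e n y ≤ e (K (j n)) y := eanti y hKjn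
      have h2 := key y hy (j n)
      have h3 : 2 * C₂ * (m : ℝ) * η (j n) ≤ C' * ε' n := by
        have h4 : 2 * C₂ * (m : ℝ) ≤ C' := by
          have : (0:ℝ) ≤ C₁ * r / η 0 := by
            apply div_nonneg _ (hη0 0).le; positivity
          simp only [hC'def]; linarith
        have := hη0 (j n)
        simp only [hε'def]
        nlinarith
      linarith
    · push_neg at hn
      have hj0 : j n = 0 := by
        rw [hjdef]
        simp only
        rw [Nat.findGreatest_eq_zero_iff]
        intro i hi hin hKi
        have : K 0 ≤ K i := (hKmono.monotone (Nat.zero_le i))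
        omega
      have h1 : e n y ≤ C₁ * dist y 0 := hbound n y
      have h2 : dist y 0 ≤ r / 2 := Metric.mem_closedBall.mp hy
      have h3 : C₁ * dist y 0 ≤ C₁ * (r / 2) := by nlinarith
      have h4 : C₁ * (r / 2) ≤ C' * ε' n := by
        simp only [hε'def, hj0]
        have hdiv : C₁ * r / η 0 * η 0 = C₁ * r :=
          div_mul_cancel₀ _ (ne_of_gt (hη0 0))
        have h5 : C₁ * r / η 0 ≤ C' := by
          have : (0:ℝ) ≤ 2 * C₂ * m := by positivity
          simp only [hC'def]; linarith
        have h6 : C₁ * r / η 0 * η 0 ≤ C' * η 0 :=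
          mul_le_mul_of_nonneg_right h5 (hη0 0).le
        rw [hdiv] at h6
        have h7 : C₁ * (r / 2) ≤ C₁ * r := by nlinarith
        exact h7.trans h6
      exact (h1.trans h3).trans h4
  · rintro ⟨ε, C, r₀, hε0, hεanti, hεlim, hC, hr₀, hball⟩
    refine ⟨ε, hε0, hεanti, hεlim, fun x => ?_⟩
    -- scale x into the ball
    obtain ⟨α, hα0, hαx⟩ : ∃ α : ℝ, 0 < α ∧ α • x ∈ closedBall (0 : X) r₀ := by
      have h : Tendsto (fun α : ℝ => α • x) (nhds 0) (nhds ((0:ℝ) • x)) := by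
        exact (continuous_id.smul continuous_const).tendsto 0
      rw [zero_smul] at h
      have : ∀ᶠ α : ℝ in nhds 0, α • x ∈ closedBall (0 : X) r₀ :=
        h (closedBall_mem_nhds 0 hr₀)
      obtain ⟨δ, hδ, hδ'⟩ := Metric.eventually_nhds_iff.mp this
      refine ⟨δ / 2, by linarith, hδ' ?_⟩
      rw [Real.dist_eq, sub_zero, abs_of_pos (by linarith : (0:ℝ) < δ/2)]
      linarith
    refine ⟨max (φ |α⁻¹|) 0 * C, fun n => ?_⟩
    have h1 : e n x = e n (α⁻¹ • (α • x)) := by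
      rw [smul_smul, inv_mul_cancel₀ (ne_of_gt hα0), one_smul]
    have h2 : e n (α⁻¹ • (α • x)) ≤ φ |α⁻¹| * e n (α • x) := hsmul n _ _
    have h3 : e n (α • x) ≤ C * ε n := hball _ hαx n
    have h4 : φ |α⁻¹| * e n (α • x) ≤ max (φ |α⁻¹|) 0 * e n (α • x) := by
      have := hnonneg n (α • x)
      nlinarith [le_max_left (φ |α⁻¹|) 0]
    have h5 : max (φ |α⁻¹|) 0 * e n (α • x) ≤ max (φ |α⁻¹|) 0 * (C * ε n) := by
      have hm : (0:ℝ) ≤ max (φ |α⁻¹|) 0 := le_max_right _ _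
      nlinarith
    calc e n x = e n (α⁻¹ • (α • x)) := h1
      _ ≤ φ |α⁻¹| * e n (α • x) := h2
      _ ≤ max (φ |α⁻¹|) 0 * e n (α • x) := h4
      _ ≤ max (φ |α⁻¹|) 0 * (C * ε n) := h5
      _ = max (φ |α⁻¹|) 0 * C * ε n := by ring
end

section
/- Let (X,d) be an infinite compact metric space and consider on C(X) (with the sup norm) the scale Ω(f) = {ω(f, 1/(1+n))}_{n≥0}, where ω(f,δ) = sup_{d(x,y)≤δ} |f(x)-f(y)| is the modulus of continuity. Then Ω satisfies Shapiro's theorem on C(X): for every sequence ε_n ↘ 0 there exists f ∈ C(X) with ω(f,1/(1+n)) → 0 and ω(f,1/(1+n)) ≠ O(ε_n). -/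
open Filter

/-- The modulus of continuity `ω(f,δ) = sup_{d(x,y) ≤ δ} |f x - f y|`. -/
noncomputable def modulusOfContinuity {X : Type*} [MetricSpace X] (f : X → ℝ) (δ : ℝ) : ℝ :=
  sSup {v : ℝ | ∃ x y : X, dist x y ≤ δ ∧ v = |f x - f y|}

/-- An infinite compact metric space has a point with other points arbitrarily close. -/
lemma exists_accumulation_point {X : Type*} [MetricSpace X] [CompactSpace X]
    (hX : Set.Infinite (Set.univ : Set X)) :
    ∃ p : X, ∀ c : ℝ, 0 < c → ∃ y : X, y ≠ p ∧ dist y p < c := by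
  have hinf : Infinite X := Set.infinite_univ_iff.mp hX
  let u : ℕ → X := fun n => (Infinite.natEmbedding X) n
  have hu : Function.Injective u := (Infinite.natEmbedding X).injective
  obtain ⟨p, φ, hφ, hlim⟩ := CompactSpace.tendsto_subseq u
  refine ⟨p, fun c hc => ?_⟩
  rw [Metric.tendsto_atTop] at hlim
  obtain ⟨K, hK⟩ := hlim c hc
  by_cases h : u (φ K) = p
  · refine ⟨u (φ (K + 1)), ?_, by simpa [Function.comp] using hK (K + 1) (Nat.le_succ K)⟩
    intro he
    have : φ K = φ (K + 1) := hu (h.trans he.symm)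
    exact (hφ (Nat.lt_succ_self K)).ne this
  · exact ⟨u (φ K), h, by simpa [Function.comp] using hK K le_rfl⟩

/-- On an infinite compact metric space `X`, the scale
`Ω(f) = {ω(f, 1/(1+n))}` on `C(X)` satisfies Shapiro's theorem: for every `ε_n ↘ 0`
there is `f ∈ C(X)` with `ω(f, 1/(1+n)) → 0` and `ω(f, 1/(1+n)) ≠ O(ε_n)`. -/
theorem modulus_of_continuity_scale_satisfies_shapiro
    {X : Type*} [MetricSpace X] [CompactSpace X] (hX : Set.Infinite (Set.univ : Set X))
    (ε : ℕ → ℝ) (hεnonneg : ∀ n, 0 ≤ ε n) (hεanti : Antitone ε)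
    (hεlim : Tendsto ε atTop (nhds 0)) :
    ∃ f : C(X, ℝ),
      Tendsto (fun n : ℕ => modulusOfContinuity f (1 / (1 + (n : ℝ)))) atTop (nhds 0) ∧
      ¬ ∃ C : ℝ, ∀ n : ℕ, modulusOfContinuity f (1 / (1 + (n : ℝ))) ≤ C * ε n := by
  obtain ⟨p, hp⟩ := exists_accumulation_point hX
  -- a selection function
  choose Y hYne hYlt using hp
  set pick : ℝ → X := fun c => if h : 0 < c then Y c h else p with hpick
  have pick_ne : ∀ c : ℝ, 0 < c → pick c ≠ p := by
    intro c hc; simp only [hpick, dif_pos hc]; exact hYne c hc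
  have pick_lt : ∀ c : ℝ, 0 < c → dist (pick c) p < c := by
    intro c hc; simp only [hpick, dif_pos hc]; exact hYlt c hc
  -- recursively chosen points approaching p with decreasing distances
  set y : ℕ → X := fun k =>
    Nat.rec (pick 1) (fun k yk => pick (min (1 / (1 + (k : ℝ) + 1)) (dist yk p))) k with hy
  set r : ℕ → ℝ := fun k => dist (y k) p with hr
  have hδpos : ∀ k : ℕ, (0 : ℝ) < 1 / (1 + (k : ℝ)) := by
    intro k; positivity
  have rpos : ∀ k, 0 < r k := by
    intro k
    induction k with
    | zero => exact dist_pos.mpr (pick_ne 1 one_pos)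
    | succ k ih =>
      have hmin : 0 < min (1 / (1 + (k : ℝ) + 1)) (dist (y k) p) :=
        lt_min (by positivity) ih
      exact dist_pos.mpr (pick_ne _ hmin)
  have rle : ∀ k : ℕ, r k ≤ 1 / (1 + (k : ℝ)) := by
    intro k
    cases k with
    | zero => exact le_of_le_of_eq (pick_lt 1 one_pos).le (by norm_num)
    | succ k =>
      have hmin : 0 < min (1 / (1 + (k : ℝ) + 1)) (dist (y k) p) :=
        lt_min (by positivity) (rpos k)
      have := (pick_lt _ hmin).le
      refine this.trans ((min_le_left _ _).trans (le_of_eq ?_))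
      push_cast
      ring
  have rdecr : ∀ k : ℕ, r (k + 1) ≤ r k := by
    intro k
    have hmin : 0 < min (1 / (1 + (k : ℝ) + 1)) (dist (y k) p) :=
      lt_min (by positivity) (rpos k)
    exact (pick_lt _ hmin).le.trans (min_le_right _ _)
  have rAnti : Antitone r := antitone_nat_of_succ_le rdecr
  -- the target moduli
  set b : ℕ → ℝ := fun k => Real.sqrt (ε k) + 1 / (1 + (k : ℝ)) with hb
  have hbanti : Antitone b := by
    intro m n hmn
    have h1 : Real.sqrt (ε n) ≤ Real.sqrt (ε m) := Real.sqrt_le_sqrt (hεanti hmn)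
    have h2 : 1 / (1 + (n : ℝ)) ≤ 1 / (1 + (m : ℝ)) := by
      apply one_div_le_one_div_of_le (by positivity)
      have : (m : ℝ) ≤ n := Nat.cast_le.mpr hmn
      linarith
    simpa [hb] using add_le_add h1 h2
  have hblim : Tendsto b atTop (nhds 0) := by
    have h1 : Tendsto (fun k => Real.sqrt (ε k)) atTop (nhds 0) := by
      have := (Real.continuous_sqrt.tendsto 0).comp hεlim
      simpa [Function.comp_def] using this
    have h2 : Tendsto (fun k : ℕ => 1 / (1 + (k : ℝ))) atTop (nhds 0) := by
      have := tendsto_one_div_add_atTop_nhds_zero_nat (𝕜 := ℝ)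
      simpa [add_comm] using this
    rw [hb]
    simpa using h1.add h2
  set a : ℕ → ℝ := fun k => b k - b (k + 1) with ha
  have ha0 : ∀ k, 0 ≤ a k := fun k => sub_nonneg.mpr (hbanti (Nat.le_succ k))
  have hsumrange : ∀ N : ℕ, ∑ i ∈ Finset.range N, a i = b 0 - b N := by
    intro N; simpa [ha] using Finset.sum_range_sub' b N
  have hHasSum : HasSum a (b 0) := by
    rw [hasSum_iff_tendsto_nat_of_nonneg ha0]
    simp only [hsumrange]
    simpa using tendsto_const_nhds.sub hblim
  have hsummable : Summable a := hHasSum.summable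
  have htsum : ∑' k, a k = b 0 := hHasSum.tsum_eq
  -- the function
  set g : ℕ → X → ℝ := fun k x => a k * min 1 (dist x p / r k) with hg
  have hg_cont : ∀ k, Continuous (g k) := by
    intro k
    exact continuous_const.mul (continuous_const.min ((continuous_id.dist
      continuous_const).div_const _))
  have hg_nonneg : ∀ k x, 0 ≤ g k x := by
    intro k x
    exact mul_nonneg (ha0 k) (le_min zero_le_one (div_nonneg dist_nonneg (rpos k).le))
  have hg_le : ∀ k x, g k x ≤ a k :=
    fun k x => mul_le_of_le_one_right (ha0 k) (min_le_left _ _)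
  have hgsummable : ∀ x, Summable (fun k => g k x) :=
    fun x => Summable.of_nonneg_of_le (fun k => hg_nonneg k x) (fun k => hg_le k x) hsummable
  set f : X → ℝ := fun x => ∑' k, g k x with hf
  have hf_cont : Continuous f := by
    apply continuous_tsum hg_cont hsummable
    intro k x
    rw [Real.norm_eq_abs, abs_of_nonneg (hg_nonneg k x)]
    exact hg_le k x
  have hf_nonneg : ∀ x, 0 ≤ f x := fun x => tsum_nonneg (fun k => hg_nonneg k x)
  have hf_le : ∀ x, f x ≤ b 0 := by
    intro x
    calc f x ≤ ∑' k, a k := Summable.tsum_le_tsum (fun k => hg_le k x) (hgsummable x) hsummable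
    _ = b 0 := htsum
  have hfp : f p = 0 := by
    simp [hf, hg, dist_self, zero_div]
  -- lower bound at the chosen points
  have hfy : ∀ k, b k ≤ f (y k) := by
    intro k
    have key : ∀ N : ℕ, k ≤ N → b k - b N ≤ f (y k) := by
      intro N hkN
      have hsum : ∑ j ∈ Finset.Ico k N, g j (y k) = b k - b N := by
        have hcongr : ∀ j ∈ Finset.Ico k N, g j (y k) = a j := by
          intro j hj
          have hkj : k ≤ j := (Finset.mem_Ico.mp hj).1
          have hrj : r j ≤ r k := rAnti hkj
          have : (1 : ℝ) ≤ dist (y k) p / r j := by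
            rw [le_div_iff₀ (rpos j)]
            simpa [hr, one_mul] using hrj
          simp [hg, min_eq_left this]
        rw [Finset.sum_congr rfl hcongr, Finset.sum_Ico_eq_sub _ hkN,
          hsumrange, hsumrange]
        ring
      calc b k - b N = ∑ j ∈ Finset.Ico k N, g j (y k) := hsum.symm
      _ ≤ f (y k) := Summable.sum_le_tsum _ (fun j _ => hg_nonneg j (y k)) (hgsummable (y k))
    have htend : Tendsto (fun N : ℕ => b k - b N) atTop (nhds (b k)) := by
      simpa using tendsto_const_nhds.sub hblim
    exact le_of_tendsto htend (eventually_atTop.mpr ⟨k, key⟩)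
  -- the continuous map
  refine ⟨⟨f, hf_cont⟩, ?_, ?_⟩
  · -- tendsto of modulus of continuity
    simp only [ContinuousMap.coe_mk]
    rw [Metric.tendsto_atTop]
    intro η hη
    have huc : UniformContinuous f := CompactSpace.uniformContinuous_of_continuous hf_cont
    rw [Metric.uniformContinuous_iff] at huc
    obtain ⟨δ, hδ, hδ'⟩ := huc (η / 2) (by linarith)
    obtain ⟨N, hN⟩ := exists_nat_gt (1 / δ)
    refine ⟨N, fun n hn => ?_⟩
    have hlt : 1 / (1 + (n : ℝ)) < δ := by
      rw [div_lt_iff₀ (by positivity)]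
      rw [div_lt_iff₀ hδ] at hN
      have : (N : ℝ) ≤ n := Nat.cast_le.mpr hn
      nlinarith
    have hball : ∀ v ∈ {v : ℝ | ∃ x z : X, dist x z ≤ 1 / (1 + (n : ℝ)) ∧
        v = |f x - f z|}, v ≤ η / 2 := by
      rintro v ⟨x, z, hxz, rfl⟩
      have := hδ' (show dist x z < δ from lt_of_le_of_lt hxz hlt)
      rw [Real.dist_eq] at this
      exact this.le
    have hη2 : (0:ℝ) ≤ η / 2 := by linarith
    have hub : modulusOfContinuity f (1 / (1 + (n : ℝ))) ≤ η / 2 :=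
      Real.sSup_le hball hη2
    have hlb : 0 ≤ modulusOfContinuity f (1 / (1 + (n : ℝ))) := by
      apply le_csSup ⟨η / 2, hball⟩
      exact ⟨p, p, by rw [dist_self]; exact (hδpos n).le, by simp⟩
    rw [Real.dist_eq, abs_of_nonneg (by linarith [hub, hlb] : (0:ℝ) ≤ _)]
    · linarith
  · -- not O(ε)
    simp only [ContinuousMap.coe_mk]
    rintro ⟨C, hC⟩
    set D : ℝ := max C 1 with hD
    have hDpos : 0 < D := lt_of_lt_of_le one_pos (le_max_right C 1)
    have : ∀ᶠ n in atTop, ε n < 1 / D ^ 2 :=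
      hεlim.eventually (gt_mem_nhds (by positivity))
    obtain ⟨K, hK⟩ := eventually_atTop.mp this
    have hεK := hK K le_rfl
    -- sqrt (ε K) ≤ 1/D
    have hs : Real.sqrt (ε K) ≤ 1 / D := by
      have h1 : Real.sqrt (ε K) ≤ Real.sqrt (1 / D ^ 2) := Real.sqrt_le_sqrt hεK.le
      have h2 : Real.sqrt (1 / D ^ 2) = 1 / D := by
        rw [one_div, one_div, Real.sqrt_inv, Real.sqrt_sq hDpos.le]
      rw [h2] at h1; exact h1
    -- the modulus at K is at least b K
    have hbig : b K ≤ modulusOfContinuity f (1 / (1 + (K : ℝ))) := by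
      have hmem : f (y K) ∈ {v : ℝ | ∃ x z : X, dist x z ≤ 1 / (1 + (K : ℝ)) ∧
          v = |f x - f z|} := by
        refine ⟨y K, p, rle K, ?_⟩
        rw [hfp, sub_zero, abs_of_nonneg (hf_nonneg (y K))]
      have hbdd : BddAbove {v : ℝ | ∃ x z : X, dist x z ≤ 1 / (1 + (K : ℝ)) ∧
          v = |f x - f z|} := by
        refine ⟨b 0, ?_⟩
        rintro v ⟨x, z, _, rfl⟩
        have h1 := hf_nonneg x; have h2 := hf_nonneg z
        have h3 := hf_le x; have h4 := hf_le z
        rw [abs_le]; constructor <;> linarith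
      exact le_trans (hfy K) (le_csSup hbdd hmem)
    have hsmall : C * ε K < b K := by
      have h1 : C * ε K ≤ D * ε K :=
        mul_le_mul_of_nonneg_right (le_max_left C 1) (hεnonneg K)
      have h2 : D * Real.sqrt (ε K) ≤ 1 := by
        calc D * Real.sqrt (ε K) ≤ D * (1 / D) :=
              mul_le_mul_of_nonneg_left hs hDpos.le
        _ = 1 := by field_simp
      have h3 : ε K = Real.sqrt (ε K) * Real.sqrt (ε K) :=
        (Real.mul_self_sqrt (hεnonneg K)).symm
      have h4 : 0 ≤ Real.sqrt (ε K) := Real.sqrt_nonneg _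
      have h5 : (0 : ℝ) < 1 / (1 + (K : ℝ)) := hδpos K
      have : D * ε K ≤ Real.sqrt (ε K) := by nlinarith
      have : C * ε K ≤ Real.sqrt (ε K) := le_trans h1 this
      simp only [hb]
      linarith
    have hCK : modulusOfContinuity f (1 / (1 + (K : ℝ))) ≤ C * ε K := hC K
    exact absurd hCK (not_le.mpr (lt_of_lt_of_le hsmall hbig))
end

section
/- Let (X,ρ) be an F-space and (Y,d) a metric vector space with non-decreasing translation-invariant metric. Let T, T_n: X → Y be continuous linear operators. Then the following are equivalent: (i) T_n converges pointwise to T but does not converge almost arbitrarily slowly to T; (ii) there exist a sequence ε_n ↘ 0 and r_0 > 0 such that (T_n − T)(B_ρ(0,r_0)) ⊆ B_d(0,ε_n) for all n. -/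
open Filter Metric

section Aux

variable {Y : Type*} [AddCommGroup Y] [Module ℝ Y] [MetricSpace Y]

lemma aux_dist_sub (hinvY : ∀ x y z : Y, dist (x + z) (y + z) = dist x y)
    (a b : Y) : dist a b = dist (a - b) 0 := by
  have h := hinvY (a - b) 0 b
  simpa using h

lemma aux_dist_neg (hinvY : ∀ x y z : Y, dist (x + z) (y + z) = dist x y)
    (a : Y) : dist (-a) 0 = dist a 0 := by
  have h := hinvY (-a) 0 a
  simp only [neg_add_cancel, zero_add] at h
  rw [← h, dist_comm]

lemma aux_dist_add (hinvY : ∀ x y z : Y, dist (x + z) (y + z) = dist x y)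
    (a b : Y) : dist (a + b) 0 ≤ dist a 0 + dist b 0 := by
  have h := hinvY a 0 b
  simp only [zero_add] at h
  calc dist (a + b) 0 ≤ dist (a + b) b + dist b 0 := dist_triangle _ _ _
    _ = dist a 0 + dist b 0 := by rw [h]

lemma aux_dist_nsmul (hinvY : ∀ x y z : Y, dist (x + z) (y + z) = dist x y)
    (m : ℕ) (y : Y) : dist ((m : ℝ) • y) 0 ≤ m * dist y 0 := by
  induction m with
  | zero => simp
  | succ k ih =>
      have : ((k + 1 : ℕ) : ℝ) • y = (k : ℝ) • y + y := by
        push_cast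
        rw [add_smul, one_smul]
      rw [this]
      calc dist ((k : ℝ) • y + y) 0 ≤ dist ((k : ℝ) • y) 0 + dist y 0 :=
            aux_dist_add hinvY _ _
        _ ≤ k * dist y 0 + dist y 0 := by linarith
        _ = (k + 1 : ℕ) * dist y 0 := by push_cast; ring

lemma aux_dist_smul (hinvY : ∀ x y z : Y, dist (x + z) (y + z) = dist x y)
    (hndY : ∀ (α : ℝ) (y : Y), 0 ≤ α → α ≤ 1 → dist (α • y) 0 ≤ dist y 0)
    (lam : ℝ) (hl : 0 ≤ lam) (y : Y) :
    dist (lam • y) 0 ≤ (⌈lam⌉₊ : ℝ) * dist y 0 := by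
  rcases eq_or_lt_of_le hl with h0 | h0
  · simp [← h0]
  · set m : ℕ := ⌈lam⌉₊ with hm
    have hmpos : (0 : ℝ) < m := by
      have : 0 < m := Nat.ceil_pos.mpr h0
      exact_mod_cast this
    have hle : lam ≤ m := Nat.le_ceil lam
    have key : lam • y = (lam / m) • ((m : ℝ) • y) := by
      rw [smul_smul, div_mul_cancel₀ _ (ne_of_gt hmpos)]
    rw [key]
    calc dist ((lam / m) • ((m : ℝ) • y)) 0 ≤ dist ((m : ℝ) • y) 0 :=
          hndY _ _ (div_nonneg hl hmpos.le) (by rw [div_le_one hmpos]; exact hle)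
      _ ≤ m * dist y 0 := aux_dist_nsmul hinvY m y

end Aux

/-- Let `X` be an F-space and `Y` a metric vector space with
non-decreasing translation-invariant metric, and let `T, T_n : X → Y` be continuous
linear operators. Then the following are equivalent:
(i) `T_n → T` pointwise but `T_n` does not converge almost arbitrarily slowly to `T`;
(ii) there exist `ε_n ↘ 0` and `r₀ > 0` with `(T_n − T)(B_ρ(0,r₀)) ⊆ B_d(0,ε_n)`. -/
theorem pointwise_not_aas_iff_uniform_on_ball
    {X : Type*} [AddCommGroup X] [Module ℝ X] [MetricSpace X]
    [IsTopologicalAddGroup X] [ContinuousSMul ℝ X] [CompleteSpace X]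
    (hinvX : ∀ x y z : X, dist (x + z) (y + z) = dist x y)
    {Y : Type*} [AddCommGroup Y] [Module ℝ Y] [MetricSpace Y]
    [IsTopologicalAddGroup Y] [ContinuousSMul ℝ Y]
    (hinvY : ∀ x y z : Y, dist (x + z) (y + z) = dist x y)
    (hndY : ∀ (α : ℝ) (y : Y), 0 ≤ α → α ≤ 1 → dist (α • y) 0 ≤ dist y 0)
    (T : X →L[ℝ] Y) (Tn : ℕ → X →L[ℝ] Y) :
    ((∀ x : X, Tendsto (fun n => Tn n x) atTop (nhds (T x))) ∧
      ¬ ((∀ x : X, Tendsto (fun n => Tn n x) atTop (nhds (T x))) ∧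
        (∀ ε : ℕ → ℝ, (∀ n, 0 ≤ ε n) → Antitone ε → Tendsto ε atTop (nhds 0) →
          ∃ x : X, {n : ℕ | ε n ≤ dist (Tn n x) (T x)}.Infinite))) ↔
    (∃ (ε : ℕ → ℝ) (r₀ : ℝ), (∀ n, 0 ≤ ε n) ∧ Antitone ε ∧
      Tendsto ε atTop (nhds 0) ∧ 0 < r₀ ∧
      ∀ n : ℕ, ∀ x ∈ closedBall (0 : X) r₀, Tn n x - T x ∈ closedBall (0 : Y) (ε n)) := by
  constructor
  · rintro ⟨hpt, hnaas⟩
    -- extract the witness ε from ¬AAS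
    push_neg at hnaas
    obtain ⟨ε, hε0, hεa, hεt, hfin⟩ := hnaas hpt
    -- ε n > 0 for all n
    have hεpos : ∀ n, 0 < ε n := by
      intro n
      rcases lt_or_eq_of_le (hε0 n) with h | h
      · exact h
      · exfalso
        have : {k : ℕ | ε k ≤ dist (Tn k (0 : X)) (T 0)}.Infinite := by
          refine Set.infinite_of_injective_forall_mem
            (f := fun i : ℕ => n + i) (add_right_injective n) (fun i => ?_)
          have : ε (n + i) ≤ 0 := h ▸ hεa (Nat.le_add_right n i)
          simp only [Set.mem_setOf_eq]
          exact le_trans this dist_nonneg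
        exact this (hfin 0)
    -- the closed sets Δ m
    set Δ : ℕ → Set X := fun m => {x | ∀ n, dist (Tn n x) (T x) ≤ m * ε n} with hΔ
    have hclosed : ∀ m, IsClosed (Δ m) := by
      intro m
      have : Δ m = ⋂ n, {x | dist (Tn n x) (T x) ≤ m * ε n} := by
        ext x; simp [hΔ, Set.mem_iInter]
      rw [this]
      exact isClosed_iInter fun n =>
        isClosed_le (Continuous.dist (Tn n).continuous T.continuous) continuous_const
    have hcover : ⋃ m, Δ m = Set.univ := by
      ext x
      simp only [Set.mem_iUnion, Set.mem_univ, iff_true]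
      have hfx := hfin x
      set M : ℕ := (hfx.toFinset.sup fun n => ⌈dist (Tn n x) (T x) / ε n⌉₊) ⊔ 1 with hM
      refine ⟨M, fun n => ?_⟩
      by_cases hn : ε n ≤ dist (Tn n x) (T x)
      · have hmem : n ∈ hfx.toFinset := by simp [Set.Finite.mem_toFinset, Set.mem_setOf_eq, hn]
        have h1 : ⌈dist (Tn n x) (T x) / ε n⌉₊ ≤ M := by
          rw [hM]
          exact le_sup_of_le_left (Finset.le_sup (f := fun n => ⌈dist (Tn n x) (T x) / ε n⌉₊) hmem)
        have h2 : dist (Tn n x) (T x) / ε n ≤ (⌈dist (Tn n x) (T x) / ε n⌉₊ : ℝ) :=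
          Nat.le_ceil _
        have h3 : dist (Tn n x) (T x) ≤ (⌈dist (Tn n x) (T x) / ε n⌉₊ : ℝ) * ε n := by
          rw [div_le_iff₀ (hεpos n)] at h2
          exact h2
        calc dist (Tn n x) (T x) ≤ (⌈dist (Tn n x) (T x) / ε n⌉₊ : ℝ) * ε n := h3
          _ ≤ M * ε n := by
              apply mul_le_mul_of_nonneg_right _ (hε0 n)
              exact_mod_cast h1
      · push_neg at hn
        have hM1 : (1 : ℝ) ≤ M := by
          have : 1 ≤ M := le_sup_right
          exact_mod_cast this
        calc dist (Tn n x) (T x) ≤ ε n := hn.le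
          _ = 1 * ε n := (one_mul _).symm
          _ ≤ M * ε n := mul_le_mul_of_nonneg_right hM1 (hε0 n)
    obtain ⟨m, hm⟩ := nonempty_interior_of_iUnion_of_closed hclosed hcover
    obtain ⟨x₀, hx₀⟩ := hm
    obtain ⟨δ, hδpos, hball⟩ := Metric.isOpen_iff.mp isOpen_interior x₀ hx₀
    have hballΔ : ball x₀ δ ⊆ Δ m := hball.trans interior_subset
    refine ⟨fun n => (2 * (m:ℝ)) * ε n, δ / 2,
      fun n => mul_nonneg (by positivity) (hε0 n),
      fun a b hab => mul_le_mul_of_nonneg_left (hεa hab) (by positivity),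
      ?_, by positivity, ?_⟩
    · have := hεt.const_mul (2 * (m : ℝ))
      rw [mul_zero] at this
      exact this
    · intro n x hx
      simp only [Metric.mem_closedBall] at hx ⊢
      have hxd : dist x 0 ≤ δ / 2 := by simpa using hx
      -- x₀ + x and x₀ - x are in the ball
      have h1 : x₀ + x ∈ Δ m := by
        apply hballΔ
        rw [Metric.mem_ball]
        have : dist (x₀ + x) x₀ = dist x 0 := by
          have := hinvX x 0 x₀
          simpa [add_comm] using this
        rw [this]; linarith
      have h2 : x₀ - x ∈ Δ m := by
        apply hballΔ
        rw [Metric.mem_ball]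
        have h := hinvX (-x) 0 x₀
        simp only [zero_add] at h
        have : dist (x₀ - x) x₀ = dist x 0 :=
          calc dist (x₀ - x) x₀ = dist (-x + x₀) x₀ := by rw [sub_eq_add_neg, add_comm]
            _ = dist (-x) 0 := h
            _ = dist x 0 := aux_dist_neg hinvX x
        rw [this]; linarith
      set u : Y := Tn n (x₀ + x) - T (x₀ + x) with hu
      set v : Y := Tn n (x₀ - x) - T (x₀ - x) with hv
      have hdu : dist u 0 ≤ m * ε n := by
        rw [hu, ← aux_dist_sub hinvY]
        exact h1 n
      have hdv : dist v 0 ≤ m * ε n := by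
        rw [hv, ← aux_dist_sub hinvY]
        exact h2 n
      have hkey : Tn n x - T x = (1/2 : ℝ) • (u + (-v)) := by
        rw [hu, hv]
        have : Tn n (x₀ + x) - T (x₀ + x) + -(Tn n (x₀ - x) - T (x₀ - x))
            = (2 : ℝ) • (Tn n x - T x) := by
          simp only [map_add, map_sub]
          module
        rw [this, smul_smul]
        norm_num
      rw [hkey]
      calc dist ((1/2 : ℝ) • (u + (-v))) 0 ≤ dist (u + (-v)) 0 :=
            hndY _ _ (by norm_num) (by norm_num)
        _ ≤ dist u 0 + dist (-v) 0 := aux_dist_add hinvY _ _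
        _ = dist u 0 + dist v 0 := by rw [aux_dist_neg hinvY]
        _ ≤ 2 * m * ε n := by linarith
  · rintro ⟨ε, r₀, hε0, hεa, hεt, hr₀, hub⟩
    -- key: pointwise bound with a constant depending on x
    have key : ∀ x : X, ∃ C : ℕ, ∀ n, dist (Tn n x) (T x) ≤ C * ε n := by
      intro x
      have hc : Tendsto (fun t : ℝ => t • x) (nhds 0) (nhds ((0:ℝ) • x)) :=
        ((continuous_id.smul continuous_const).tendsto 0)
      rw [zero_smul] at hc
      have hev : ∀ᶠ t : ℝ in nhds 0, (t • x) ∈ closedBall (0 : X) r₀ :=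
        hc (Metric.closedBall_mem_nhds 0 hr₀)
      obtain ⟨δ, hδpos, hδ⟩ := Metric.eventually_nhds_iff_ball.mp hev
      set α : ℝ := δ / 2 with hα
      have hαpos : 0 < α := by positivity
      have hαmem : α • x ∈ closedBall (0 : X) r₀ := by
        apply hδ
        rw [Metric.mem_ball, Real.dist_eq, sub_zero, abs_of_pos hαpos]
        linarith
      refine ⟨⌈1 / α⌉₊, fun n => ?_⟩
      have hb := hub n _ hαmem
      rw [Metric.mem_closedBall] at hb
      have hbd : dist (Tn n (α • x) - T (α • x)) 0 ≤ ε n := by simpa using hb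
      have hrec : Tn n x - T x = (1 / α) • (Tn n (α • x) - T (α • x)) := by
        rw [map_smul, map_smul, smul_sub, smul_smul, smul_smul,
          one_div_mul_cancel (ne_of_gt hαpos), one_smul, one_smul]
      rw [aux_dist_sub hinvY, hrec]
      calc dist ((1 / α) • (Tn n (α • x) - T (α • x))) 0
          ≤ (⌈1 / α⌉₊ : ℝ) * dist (Tn n (α • x) - T (α • x)) 0 :=
            aux_dist_smul hinvY hndY _ (by positivity) _
        _ ≤ (⌈1 / α⌉₊ : ℝ) * ε n := by
            apply mul_le_mul_of_nonneg_left hbd (by positivity)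
    have hpt : ∀ x : X, Tendsto (fun n => Tn n x) atTop (nhds (T x)) := by
      intro x
      obtain ⟨C, hC⟩ := key x
      rw [tendsto_iff_dist_tendsto_zero]
      apply squeeze_zero (fun n => dist_nonneg) hC
      have h5 : Tendsto (fun n => (C:ℝ) * ε n) atTop (nhds ((C:ℝ) * 0)) :=
        hεt.const_mul _
      rw [mul_zero] at h5
      exact h5
    refine ⟨hpt, ?_⟩
    rintro ⟨-, haas⟩
    set ε' : ℕ → ℝ := fun n => Real.sqrt (ε n + (1/2 : ℝ) ^ n) with hε'
    have hε'pos : ∀ n, 0 < ε' n := by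
      intro n
      apply Real.sqrt_pos.mpr
      have : (0:ℝ) < (1/2:ℝ)^n := by positivity
      have := hε0 n
      linarith
    have hε'0 : ∀ n, 0 ≤ ε' n := fun n => (hε'pos n).le
    have hε'a : Antitone ε' := by
      intro a b hab
      apply Real.sqrt_le_sqrt
      have h1 : ε b ≤ ε a := hεa hab
      have h2 : (1/2:ℝ)^b ≤ (1/2:ℝ)^a :=
        pow_le_pow_of_le_one (by norm_num) (by norm_num) hab
      linarith
    have hε't : Tendsto ε' atTop (nhds 0) := by
      have h2 : Tendsto (fun n : ℕ => (1/2:ℝ)^n) atTop (nhds 0) := by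
        apply tendsto_pow_atTop_nhds_zero_of_lt_one <;> norm_num
      have hsum : Tendsto (fun n => ε n + (1/2:ℝ)^n) atTop (nhds 0) := by
        simpa using hεt.add h2
      have h3 := (Real.continuous_sqrt.tendsto 0).comp hsum
      rw [Real.sqrt_zero] at h3
      rw [hε']
      exact h3
    obtain ⟨x, hx⟩ := haas ε' hε'0 hε'a hε't
    obtain ⟨C, hC⟩ := key x
    -- the set is finite: contradiction
    apply hx
    have hsub : {n : ℕ | ε' n ≤ dist (Tn n x) (T x)} ⊆ {n : ℕ | 1 ≤ (C : ℝ) * ε' n} := by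
      intro n hn
      simp only [Set.mem_setOf_eq] at hn ⊢
      have hb : dist (Tn n x) (T x) ≤ C * ε n := hC n
      have hsq : (ε' n) ^ 2 = ε n + (1/2:ℝ)^n := by
        rw [hε']
        apply Real.sq_sqrt
        have : (0:ℝ) < (1/2:ℝ)^n := by positivity
        have := hε0 n; linarith
      have hεle : ε n ≤ (ε' n)^2 := by
        rw [hsq]
        have : (0:ℝ) < (1/2:ℝ)^n := by positivity
        linarith
      have : ε' n ≤ C * (ε' n)^2 := by
        calc ε' n ≤ dist (Tn n x) (T x) := hn
          _ ≤ C * ε n := hb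
          _ ≤ C * (ε' n)^2 := by
              apply mul_le_mul_of_nonneg_left hεle (by positivity)
      have hpos := hε'pos n
      nlinarith [sq_nonneg (ε' n)]
    apply Set.Finite.subset _ hsub
    have hev : ∀ᶠ n in atTop, (C : ℝ) * ε' n < 1 := by
      have h4 : Tendsto (fun n => (C:ℝ) * ε' n) atTop (nhds ((C:ℝ) * 0)) :=
        hε't.const_mul _
      rw [mul_zero] at h4
      exact h4 (Iio_mem_nhds one_pos)
    obtain ⟨N, hN⟩ := eventually_atTop.mp hev
    apply Set.Finite.subset (Set.finite_Iio N)
    intro n hn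
    simp only [Set.mem_setOf_eq] at hn
    simp only [Set.mem_Iio]
    by_contra hcon
    push_neg at hcon
    exact absurd hn (not_le.mpr (hN n hcon))
end
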